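/- arXiv:2301.12841 — 4 statements merged into one kernel-verified Lean document; each statement's English description precedes it below -/
import Mathlib

section
/- Let q be an odd prime power, d ≥ 1, 𝓔 ⊆ F_q^d a finite set, r ∈ F_q, and k ≥ 2 an integer. Let B denote the set of tuples (x_1, ..., x_{k+1}, y_1, ..., y_{k+1}) ∈ S_k(r) such that x_1, ..., x_{k+1} are pairwise distinct and y_1, ..., y_{k+1} are pairwise distinct. Then |B| ≥ |S_k(r)| − C(k,2)·(2|𝓔| − 1)·|S_{k−1}(r)|, where C(k,2) = k(k−1)/2. -/
/-- `norm2 x = x₁² + ⋯ + x_d²` for `x ∈ F_q^d`. -/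
def norm2 {F : Type*} [Field F] {d : ℕ} (x : Fin d → F) : F := ∑ i, x i ^ 2

/-- `𝓔` contains a pair of `k`-stars with dilation ratio `r`: there are distinct
`x₁, …, x_{k+1} ∈ 𝓔` and distinct `y₁, …, y_{k+1} ∈ 𝓔` with
`‖y_i − y₁‖ = r‖x_i − x₁‖ ≠ 0` for `i = 2, …, k+1`. -/
def ContainsPairOfStars {F : Type*} [Field F] {d : ℕ}
    (𝓔 : Finset (Fin d → F)) (k : ℕ) (r : F) : Prop :=
  ∃ x y : Fin (k + 1) → (Fin d → F),
    Function.Injective x ∧ Function.Injective y ∧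
    (∀ i, x i ∈ 𝓔) ∧ (∀ i, y i ∈ 𝓔) ∧
    ∀ i : Fin (k + 1), i ≠ 0 →
      norm2 (y i - y 0) = r * norm2 (x i - x 0) ∧ r * norm2 (x i - x 0) ≠ 0

/-- `𝓔` contains a pair of `k`-paths with dilation ratio `r`: there are distinct
`x₁, …, x_{k+1} ∈ 𝓔` and distinct `y₁, …, y_{k+1} ∈ 𝓔` with
`‖y_{i+1} − y_i‖ = r‖x_{i+1} − x_i‖ ≠ 0` for `i = 1, …, k`. -/
def ContainsPairOfPaths {F : Type*} [Field F] {d : ℕ}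
    (𝓔 : Finset (Fin d → F)) (k : ℕ) (r : F) : Prop :=
  ∃ x y : Fin (k + 1) → (Fin d → F),
    Function.Injective x ∧ Function.Injective y ∧
    (∀ i, x i ∈ 𝓔) ∧ (∀ i, y i ∈ 𝓔) ∧
    ∀ i : Fin k,
      norm2 (y i.succ - y i.castSucc) = r * norm2 (x i.succ - x i.castSucc) ∧
      r * norm2 (x i.succ - x i.castSucc) ≠ 0

open scoped Classical

/-- `S_k(r)`: tuples `(x₁, …, x_{k+1}, y₁, …, y_{k+1}) ∈ 𝓔^{2k+2}` with
`‖y_i − y₁‖ = r‖x_i − x₁‖ ≠ 0` for all `i = 2, …, k+1`. -/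

noncomputable def Sset {F : Type*} [Field F] [Fintype F] {d : ℕ}
    (𝓔 : Finset (Fin d → F)) (k : ℕ) (r : F) :
    Finset ((Fin (k + 1) → Fin d → F) × (Fin (k + 1) → Fin d → F)) :=
  Finset.univ.filter fun p =>
    (∀ i, p.1 i ∈ 𝓔) ∧ (∀ i, p.2 i ∈ 𝓔) ∧
    ∀ i : Fin (k + 1), i ≠ 0 →
      norm2 (p.2 i - p.2 0) = r * norm2 (p.1 i - p.1 0) ∧
      r * norm2 (p.1 i - p.1 0) ≠ 0

section Aux
variable {F : Type*} [Field F] [Fintype F] {d : ℕ}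

lemma norm2_zero' : norm2 (0 : Fin d → F) = 0 := by simp [norm2]

lemma mem_Sset_iff {𝓔 : Finset (Fin d → F)} {k : ℕ} {r : F}
    {p : (Fin (k + 1) → Fin d → F) × (Fin (k + 1) → Fin d → F)} :
    p ∈ Sset 𝓔 k r ↔ (∀ i, p.1 i ∈ 𝓔) ∧ (∀ i, p.2 i ∈ 𝓔) ∧
      ∀ i : Fin (k + 1), i ≠ 0 →
        norm2 (p.2 i - p.2 0) = r * norm2 (p.1 i - p.1 0) ∧
        r * norm2 (p.1 i - p.1 0) ≠ 0 := by
  simp [Sset]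

lemma Sset_ne_head {𝓔 : Finset (Fin d → F)} {k : ℕ} {r : F}
    {p : (Fin (k + 1) → Fin d → F) × (Fin (k + 1) → Fin d → F)}
    (hp : p ∈ Sset 𝓔 k r) {b : Fin (k + 1)} (hb : b ≠ 0) :
    p.1 b ≠ p.1 0 ∧ p.2 b ≠ p.2 0 := by
  rw [mem_Sset_iff] at hp
  obtain ⟨h1, h2⟩ := hp.2.2 b hb
  constructor
  · intro he; apply h2; rw [he, sub_self, norm2_zero', mul_zero]
  · intro he; apply h2; rw [← h1, he, sub_self, norm2_zero']

lemma Sset_empty {k : ℕ} {r : F} : Sset (∅ : Finset (Fin d → F)) k r = ∅ := by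
  rw [Finset.eq_empty_iff_forall_notMem]
  intro p hp
  exact absurd ((mem_Sset_iff.mp hp).1 0) (by simp)

lemma Sset_delete {𝓔 : Finset (Fin d → F)} {r : F} {m : ℕ} {j : Fin (m + 3)} (hj : j ≠ 0)
    {p : (Fin (m + 3) → Fin d → F) × (Fin (m + 3) → Fin d → F)}
    (hp : p ∈ Sset 𝓔 (m + 2) r) :
    (p.1 ∘ j.succAbove, p.2 ∘ j.succAbove) ∈ Sset 𝓔 (m + 1) r := by
  rw [mem_Sset_iff] at hp ⊢
  obtain ⟨h1, h2, h3⟩ := hp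
  have h0 : j.succAbove 0 = 0 := Fin.succAbove_ne_zero_zero hj
  refine ⟨fun i => h1 _, fun i => h2 _, fun i hi => ?_⟩
  have := h3 (j.succAbove i) (Fin.succAbove_ne_zero hj hi)
  simpa [Function.comp, h0] using this

lemma pair_bound {𝓔 : Finset (Fin d → F)} {r : F} {m : ℕ}
    {i j : Fin (m + 3)} (hi : i ≠ 0) (hj : j ≠ 0) (hij : i ≠ j) :
    (((Sset 𝓔 (m + 2) r).filter fun p => p.1 i = p.1 j ∨ p.2 i = p.2 j).card : ℤ)
      ≤ (2 * (𝓔.card : ℤ) - 1) * ((Sset 𝓔 (m + 1) r).card : ℤ) := by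
  by_cases hE : 𝓔 = ∅
  · subst hE
    simp [Sset_empty]
  have hE1 : 1 ≤ 𝓔.card := Finset.card_pos.mpr (Finset.nonempty_iff_ne_empty.mpr hE)
  set S := Sset 𝓔 (m + 2) r with hSdef
  set S' := Sset 𝓔 (m + 1) r with hS'def
  obtain ⟨i', hi'⟩ := Fin.exists_succAbove_eq hij
  set A := S.filter (fun p => p.1 i = p.1 j) with hAdef
  set C := S.filter (fun p => p.2 i = p.2 j ∧ p.1 i ≠ p.1 j) with hCdef
  -- recover full tuple from deleted tuple
  have key : ∀ p q : (Fin (m + 3) → Fin d → F) × (Fin (m + 3) → Fin d → F),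
      p.1 ∘ j.succAbove = q.1 ∘ j.succAbove → p.2 ∘ j.succAbove = q.2 ∘ j.succAbove →
      ∀ l : Fin (m + 3), l ≠ j → p.1 l = q.1 l ∧ p.2 l = q.2 l := by
    intro p q h1 h2 l hl
    obtain ⟨c, hc⟩ := Fin.exists_succAbove_eq hl
    exact ⟨by rw [← hc]; exact congrFun h1 c, by rw [← hc]; exact congrFun h2 c⟩
  have hA : A.card ≤ S'.card * 𝓔.card := by
    have := Finset.card_le_card_of_injOn
      (f := fun p => ((p.1 ∘ j.succAbove, p.2 ∘ j.succAbove), p.2 j))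
      (s := A) (t := S' ×ˢ 𝓔) ?_ ?_
    · simpa [Finset.card_product] using this
    · intro p hp
      obtain ⟨hpS, _⟩ := Finset.mem_filter.mp hp
      exact Finset.mem_product.mpr ⟨Sset_delete hj hpS, (mem_Sset_iff.mp hpS).2.1 j⟩
    · intro p hp q hq h
      simp only [Prod.mk.injEq] at h
      obtain ⟨⟨h1, h2⟩, h3⟩ := h
      have hpx := (Finset.mem_filter.mp hp).2
      have hqx := (Finset.mem_filter.mp hq).2
      have hk := key p q h1 h2
      refine Prod.ext (funext fun l => ?_) (funext fun l => ?_)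
      · by_cases hl : l = j
        · subst hl; rw [← hpx, ← hqx]; exact (hk i hij).1
        · exact (hk l hl).1
      · by_cases hl : l = j
        · subst hl; exact h3
        · exact (hk l hl).2
  have hC : C.card ≤ S'.card * (𝓔.card - 1) := by
    set T := (S' ×ˢ 𝓔).filter (fun z => z.2 ≠ z.1.1 i') with hTdef
    have hCT : C.card ≤ T.card := by
      apply Finset.card_le_card_of_injOn
        (f := fun p => ((p.1 ∘ j.succAbove, p.2 ∘ j.succAbove), p.1 j))
      · intro p hp
        obtain ⟨hpS, hy, hx⟩ := Finset.mem_filter.mp hp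
        refine Finset.mem_filter.mpr ⟨Finset.mem_product.mpr
          ⟨Sset_delete hj hpS, (mem_Sset_iff.mp hpS).1 j⟩, ?_⟩
        intro he
        exact hx (by rw [← hi']; exact he.symm)
      · intro p hp q hq h
        simp only [Prod.mk.injEq] at h
        obtain ⟨⟨h1, h2⟩, h3⟩ := h
        have hpy := ((Finset.mem_filter.mp hp).2).1
        have hqy := ((Finset.mem_filter.mp hq).2).1
        have hk := key p q h1 h2
        refine Prod.ext (funext fun l => ?_) (funext fun l => ?_)
        · by_cases hl : l = j
          · subst hl; exact h3
          · exact (hk l hl).1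
        · by_cases hl : l = j
          · subst hl; rw [← hpy, ← hqy]; exact (hk i hij).2
          · exact (hk l hl).2
    have hfib : ∀ s ∈ S', (T.filter fun z => z.1 = s).card = 𝓔.card - 1 := by
      intro s hs
      have hmem : s.1 i' ∈ 𝓔 := (mem_Sset_iff.mp hs).1 i'
      have heq : (T.filter fun z => z.1 = s) = {s} ×ˢ (𝓔.erase (s.1 i')) := by
        rw [hTdef]
        ext z
        simp only [Finset.mem_filter, Finset.mem_product, Finset.mem_singleton,
          Finset.mem_erase]
        constructor
        · rintro ⟨⟨⟨_, hz2⟩, hne⟩, hz1⟩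
          exact ⟨hz1, by rw [← hz1]; exact hne, hz2⟩
        · rintro ⟨hz1, hne, hz2⟩
          exact ⟨⟨⟨hz1 ▸ hs, hz2⟩, hz1 ▸ hne⟩, hz1⟩
      rw [heq, Finset.card_product, Finset.card_singleton, one_mul,
        Finset.card_erase_of_mem hmem]
    have hTcard : T.card = S'.card * (𝓔.card - 1) := by
      calc T.card = ∑ s ∈ S', (T.filter fun z => z.1 = s).card :=
            Finset.card_eq_sum_card_fiberwise
              (fun z hz => (Finset.mem_product.mp (Finset.mem_filter.mp hz).1).1)
        _ = ∑ _s ∈ S', (𝓔.card - 1) := Finset.sum_congr rfl hfib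
        _ = S'.card * (𝓔.card - 1) := by rw [Finset.sum_const, smul_eq_mul]
    omega
  calc (((Sset 𝓔 (m + 2) r).filter fun p => p.1 i = p.1 j ∨ p.2 i = p.2 j).card : ℤ)
      ≤ (A.card : ℤ) + C.card := by
        have hsub : ((Sset 𝓔 (m + 2) r).filter fun p => p.1 i = p.1 j ∨ p.2 i = p.2 j)
            ⊆ A ∪ C := by
          intro p hp
          obtain ⟨hpS, hor⟩ := Finset.mem_filter.mp hp
          by_cases hx : p.1 i = p.1 j
          · exact Finset.mem_union_left _ (Finset.mem_filter.mpr ⟨hpS, hx⟩)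
          · rcases hor with hor | hor
            · exact absurd hor hx
            · exact Finset.mem_union_right _ (Finset.mem_filter.mpr ⟨hpS, hor, hx⟩)
        calc _ ≤ ((A ∪ C).card : ℤ) := by exact_mod_cast Finset.card_le_card hsub
          _ ≤ (A.card : ℤ) + C.card := by exact_mod_cast Finset.card_union_le A C
    _ ≤ (S'.card : ℤ) * 𝓔.card + (S'.card : ℤ) * ((𝓔.card : ℤ) - 1) := by
        have h1 : (A.card : ℤ) ≤ (S'.card : ℤ) * 𝓔.card := by exact_mod_cast hA
        have h2 : (C.card : ℤ) ≤ (S'.card : ℤ) * ((𝓔.card : ℤ) - 1) := by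
          calc (C.card : ℤ) ≤ ((S'.card * (𝓔.card - 1) : ℕ) : ℤ) := by exact_mod_cast hC
            _ = (S'.card : ℤ) * ((𝓔.card : ℤ) - 1) := by
              push_cast [Nat.cast_sub hE1]; ring
        linarith
    _ = (2 * (𝓔.card : ℤ) - 1) * S'.card := by ring

lemma card_lt_pairs (n : ℕ) :
    ((Finset.univ : Finset (Fin n × Fin n)).filter fun q => q.1 < q.2).card = n.choose 2 := by
  rw [Finset.card_eq_sum_card_fiberwise (f := fun q => q.2) (t := Finset.univ)
    (fun x _ => Finset.mem_univ _)]
  have hfib : ∀ b : Fin n,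
      (((Finset.univ : Finset (Fin n × Fin n)).filter fun q => q.1 < q.2).filter
        fun q => q.2 = b).card = b.val := by
    intro b
    have : (((Finset.univ : Finset (Fin n × Fin n)).filter fun q => q.1 < q.2).filter
        fun q => q.2 = b) = (Finset.Iio b).image (fun a => (a, b)) := by
      ext z
      simp only [Finset.mem_filter, Finset.mem_univ, true_and, Finset.mem_image,
        Finset.mem_Iio]
      constructor
      · rintro ⟨hlt, hz⟩; exact ⟨z.1, hz ▸ hlt, by rw [← hz]⟩
      · rintro ⟨a, ha, rfl⟩; exact ⟨ha, rfl⟩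
    rw [this, Finset.card_image_of_injective _ (fun a a' h => (Prod.mk.injEq _ _ _ _).mp h |>.1),
      Fin.card_Iio]
  simp only [hfib]
  rw [Fin.sum_univ_eq_sum_range (fun i => i), Finset.sum_range_id, Nat.choose_two_right]

end Aux

/-- For `k ≥ 2`, if `B` is the set of tuples of `S_k(r)` whose `x`-parts
are pairwise distinct and whose `y`-parts are pairwise distinct, then
`|B| ≥ |S_k(r)| − C(k,2)·(2|𝓔| − 1)·|S_{k−1}(r)|`. -/
theorem Sset_nondegenerate_card_ge {F : Type*} [Field F] [Fintype F]
    (hodd : Odd (Fintype.card F))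
    {d : ℕ} (hd : 1 ≤ d)
    (𝓔 : Finset (Fin d → F)) (r : F)
    {k : ℕ} (hk : 2 ≤ k) :
    ((Sset 𝓔 k r).card : ℤ)
        - (k.choose 2 : ℤ) * (2 * (𝓔.card : ℤ) - 1) * ((Sset 𝓔 (k - 1) r).card : ℤ)
      ≤ (((Sset 𝓔 k r).filter fun p =>
          Function.Injective p.1 ∧ Function.Injective p.2).card : ℤ) := by
  obtain ⟨m, rfl⟩ : ∃ m, k = m + 2 := ⟨k - 2, by omega⟩
  set S := Sset 𝓔 (m + 2) r with hSdef
  have hk1 : m + 2 - 1 = m + 1 := rfl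
  rw [hk1]
  set S' := Sset 𝓔 (m + 1) r with hS'def
  set Q : Finset (Fin (m + 2) × Fin (m + 2)) :=
    Finset.univ.filter (fun q => q.1 < q.2) with hQdef
  set D : Fin (m + 2) × Fin (m + 2) →
      Finset ((Fin (m + 3) → Fin d → F) × (Fin (m + 3) → Fin d → F)) :=
    fun q => S.filter (fun p => p.1 q.1.succ = p.1 q.2.succ ∨ p.2 q.1.succ = p.2 q.2.succ)
    with hDdef
  have hsplit : (S.filter fun p => Function.Injective p.1 ∧ Function.Injective p.2).card
      + (S.filter fun p => ¬(Function.Injective p.1 ∧ Function.Injective p.2)).card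
      = S.card := Finset.card_filter_add_card_filter_not _
  have hsub : (S.filter fun p => ¬(Function.Injective p.1 ∧ Function.Injective p.2))
      ⊆ Q.biUnion D := by
    intro p hp
    obtain ⟨hpS, hnot⟩ := Finset.mem_filter.mp hp
    have hex : ∃ a b : Fin (m + 3), a < b ∧ (p.1 a = p.1 b ∨ p.2 a = p.2 b) := by
      rw [not_and_or] at hnot
      rcases hnot with hnot | hnot
      · obtain ⟨a, b, hab, hne⟩ := Function.not_injective_iff.mp hnot
        rcases lt_or_gt_of_ne hne with h | h
        · exact ⟨a, b, h, Or.inl hab⟩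
        · exact ⟨b, a, h, Or.inl hab.symm⟩
      · obtain ⟨a, b, hab, hne⟩ := Function.not_injective_iff.mp hnot
        rcases lt_or_gt_of_ne hne with h | h
        · exact ⟨a, b, h, Or.inr hab⟩
        · exact ⟨b, a, h, Or.inr hab.symm⟩
    obtain ⟨a, b, hab, hor⟩ := hex
    have hb0 : b ≠ 0 := Fin.pos_iff_ne_zero.mp (lt_of_le_of_lt (Fin.zero_le a) hab)
    have ha0 : a ≠ 0 := by
      intro h0
      subst h0
      rcases hor with hor | hor
      · exact (Sset_ne_head hpS hb0).1 hor.symm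
      · exact (Sset_ne_head hpS hb0).2 hor.symm
    refine Finset.mem_biUnion.mpr ⟨(a.pred ha0, b.pred hb0), ?_, ?_⟩
    · refine Finset.mem_filter.mpr ⟨Finset.mem_univ _, ?_⟩
      have ha : (a.pred ha0).val = a.val - 1 := rfl
      have hbv : (b.pred hb0).val = b.val - 1 := rfl
      have h1 : a.val ≠ 0 := fun hc => ha0 (Fin.ext hc)
      simp only [Fin.lt_def, ha, hbv] at *
      omega
    · refine Finset.mem_filter.mpr ⟨hpS, ?_⟩
      simpa [Fin.succ_pred] using hor
  have hQcard : Q.card = (m + 2).choose 2 := card_lt_pairs (m + 2)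
  have hcount : (((S.filter fun p =>
      ¬(Function.Injective p.1 ∧ Function.Injective p.2)).card : ℤ))
      ≤ ((m + 2).choose 2 : ℤ) * ((2 * (𝓔.card : ℤ) - 1) * S'.card) := by
    calc (((S.filter fun p =>
        ¬(Function.Injective p.1 ∧ Function.Injective p.2)).card : ℤ))
        ≤ ((Q.biUnion D).card : ℤ) := by exact_mod_cast Finset.card_le_card hsub
      _ ≤ ∑ q ∈ Q, ((D q).card : ℤ) := by
          exact_mod_cast Finset.card_biUnion_le
      _ ≤ ∑ _q ∈ Q, (2 * (𝓔.card : ℤ) - 1) * S'.card := by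
          apply Finset.sum_le_sum
          intro q hq
          have hlt : q.1 < q.2 := (Finset.mem_filter.mp hq).2
          exact pair_bound (Fin.succ_ne_zero _) (Fin.succ_ne_zero _)
            (fun h => absurd (Fin.succ_injective _ h) (ne_of_lt hlt))
      _ = ((m + 2).choose 2 : ℤ) * ((2 * (𝓔.card : ℤ) - 1) * S'.card) := by
          rw [Finset.sum_const, hQcard, nsmul_eq_mul]
  have hBS : ((S.filter fun p => Function.Injective p.1 ∧ Function.Injective p.2).card : ℤ)
      + ((S.filter fun p => ¬(Function.Injective p.1 ∧ Function.Injective p.2)).card : ℤ)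
      = (S.card : ℤ) := by exact_mod_cast hsplit
  linarith [hcount, hBS]
end

section
/- Let q be an odd prime power, d ≥ 1, 𝓔 ⊆ F_q^d a nonempty finite set, r ∈ F_q, and k ≥ 2 an integer. If |S_1(r)| ≥ 2·C(k,2)·|𝓔|^3 (where C(k,2) = k(k−1)/2), then 𝓔 contains a pair of k-stars with dilation ratio r. -/
open scoped Classical

lemma matching_lemma {α : Type*} (B : Finset α) :
    ∀ (m : ℕ) (P : Finset (α × α)), (∀ p ∈ P, p.1 ∈ B ∧ p.2 ∈ B) →
      m * (2 * B.card - 1) < P.card →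
      ∃ g : Fin (m + 1) → α × α, (∀ i, g i ∈ P) ∧
        ∀ i j, i ≠ j → (g i).1 ≠ (g j).1 ∧ (g i).2 ≠ (g j).2 := by
  classical
  intro m
  induction m with
  | zero =>
    intro P hP hcard
    obtain ⟨p, hp⟩ := Finset.card_pos.mp (lt_of_le_of_lt (Nat.zero_le _) hcard)
    exact ⟨fun _ => p, fun _ => hp, fun i j hij => absurd (Fin.ext (by omega)) hij⟩
  | succ m ih =>
    intro P hP hcard
    obtain ⟨p, hp⟩ := Finset.card_pos.mp (lt_of_le_of_lt (Nat.zero_le _) hcard)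
    set P' := P.filter (fun q => q.1 ≠ p.1 ∧ q.2 ≠ p.2) with hP'def
    have hbadsub : P.filter (fun q => ¬(q.1 ≠ p.1 ∧ q.2 ≠ p.2)) ⊆
        ({p.1} ×ˢ B) ∪ (B ×ˢ {p.2}) := by
      intro q hq
      rw [Finset.mem_filter] at hq
      obtain ⟨hqP, hq2⟩ := hq
      push_neg at hq2
      rcases eq_or_ne q.1 p.1 with h | h
      · exact Finset.mem_union_left _ (by
          rw [Finset.mem_product]; exact ⟨by simp [h], (hP q hqP).2⟩)
      · exact Finset.mem_union_right _ (by
          rw [Finset.mem_product]; exact ⟨(hP q hqP).1, by simp [hq2 h]⟩)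
    have hunion : (({p.1} ×ˢ B) ∪ (B ×ˢ {p.2})).card ≤ 2 * B.card - 1 := by
      have h1 := Finset.card_union_add_card_inter ({p.1} ×ˢ B) (B ×ˢ {p.2})
      have h2 : p ∈ ({p.1} ×ˢ B) ∩ (B ×ˢ {p.2}) := by
        rw [Finset.mem_inter, Finset.mem_product, Finset.mem_product]
        exact ⟨⟨by simp, (hP p hp).2⟩, ⟨(hP p hp).1, by simp⟩⟩
      have h3 : 1 ≤ (({p.1} ×ˢ B) ∩ (B ×ˢ {p.2})).card := Finset.card_pos.mpr ⟨p, h2⟩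
      have h4 : ({p.1} ×ˢ B).card = B.card := by simp [Finset.card_product]
      have h5 : (B ×ˢ {p.2}).card = B.card := by simp [Finset.card_product]
      omega
    have hsplit := Finset.card_filter_add_card_filter_not
      (s := P) (p := fun q => q.1 ≠ p.1 ∧ q.2 ≠ p.2)
    rw [← hP'def] at hsplit
    have hcard' : m * (2 * B.card - 1) < P'.card := by
      have hb := Finset.card_le_card hbadsub
      have : (m + 1) * (2 * B.card - 1) = m * (2 * B.card - 1) + (2 * B.card - 1) := by ring
      omega
    have hP'B : ∀ q ∈ P', q.1 ∈ B ∧ q.2 ∈ B := fun q hq =>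
      hP q (Finset.mem_of_mem_filter _ hq)
    obtain ⟨g', hg'mem, hg'dist⟩ := ih P' hP'B hcard'
    refine ⟨Fin.cons p g', ?_, ?_⟩
    · intro i
      rcases Fin.eq_zero_or_eq_succ i with rfl | ⟨i', rfl⟩
      · simpa using hp
      · simpa using Finset.mem_of_mem_filter _ (hg'mem i')
    · intro i j hij
      have hne : ∀ i', (g' i').1 ≠ p.1 ∧ (g' i').2 ≠ p.2 := fun i' =>
        (Finset.mem_filter.mp (hg'mem i')).2
      rcases Fin.eq_zero_or_eq_succ i with rfl | ⟨i', rfl⟩ <;>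
        rcases Fin.eq_zero_or_eq_succ j with rfl | ⟨j', rfl⟩
      · exact absurd rfl hij
      · simpa using ⟨(hne j').1.symm, (hne j').2.symm⟩
      · simpa using hne i'
      · have : i' ≠ j' := fun h => hij (by rw [h])
        simpa using hg'dist i' j' this


lemma norm2_zero_aux {F : Type*} [Field F] {d : ℕ} : norm2 (0 : Fin d → F) = 0 := by
  simp [norm2]

/-- For `k ≥ 2` and `𝓔` nonempty, if `|S_1(r)| ≥ 2·C(k,2)·|𝓔|³`,
then `𝓔` contains a pair of `k`-stars with dilation ratio `r`. -/
theorem stars_of_Sset_one_large {F : Type*} [Field F] [Fintype F]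
    (hodd : Odd (Fintype.card F))
    {d : ℕ} (hd : 1 ≤ d)
    (𝓔 : Finset (Fin d → F)) (h𝓔 : 𝓔.Nonempty) (r : F)
    {k : ℕ} (hk : 2 ≤ k)
    (hS : 2 * k.choose 2 * 𝓔.card ^ 3 ≤ (Sset 𝓔 1 r).card) :
    ContainsPairOfStars 𝓔 k r := by
  classical
  obtain ⟨m, rfl⟩ : ∃ m, k = m + 2 := ⟨k - 2, by omega⟩
  obtain ⟨e, he⟩ : ∃ e, 𝓔.card = e + 1 :=
    ⟨𝓔.card - 1, by have := Finset.card_pos.mpr h𝓔; omega⟩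
  set S := Sset 𝓔 1 r with hSdef
  have hmemS : ∀ p : (Fin 2 → Fin d → F) × (Fin 2 → Fin d → F), p ∈ S ↔
      (∀ i, p.1 i ∈ 𝓔) ∧ (∀ i, p.2 i ∈ 𝓔) ∧
      ∀ i : Fin 2, i ≠ 0 →
        norm2 (p.2 i - p.2 0) = r * norm2 (p.1 i - p.1 0) ∧
        r * norm2 (p.1 i - p.1 0) ≠ 0 := by
    intro p
    simp [hSdef, Sset]
  -- N
  have hN : 2 * (m + 2).choose 2 = (m + 2) * (m + 1) := by
    rw [Nat.choose_two_right]
    have h1 : m + 2 - 1 = m + 1 := by omega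
    rw [h1]
    exact Nat.mul_div_cancel' (by rw [mul_comm]; exact (Nat.even_mul_succ_self (m+1)).two_dvd)
  -- fiberwise
  have hsum : S.card = ∑ ab ∈ 𝓔 ×ˢ 𝓔, (S.filter fun p => (p.1 0, p.2 0) = ab).card := by
    apply Finset.card_eq_sum_card_fiberwise
    intro p hp
    rw [Finset.mem_coe, Finset.mem_product]
    exact ⟨((hmemS p).mp hp).1 0, ((hmemS p).mp hp).2.1 0⟩
  set Q : (Fin d → F) × (Fin d → F) → Finset ((Fin d → F) × (Fin d → F)) := fun ab =>
    (𝓔 ×ˢ 𝓔).filter (fun ce => norm2 (ce.2 - ab.2) = r * norm2 (ce.1 - ab.1) ∧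
      r * norm2 (ce.1 - ab.1) ≠ 0) with hQdef
  have hfib : ∀ ab : (Fin d → F) × (Fin d → F), (S.filter fun p => (p.1 0, p.2 0) = ab).card ≤ (Q ab).card := by
    intro ab
    apply Finset.card_le_card_of_injOn (fun p => (p.1 1, p.2 1))
    · intro p hp
      rw [Finset.mem_coe, Finset.mem_filter] at hp
      obtain ⟨hpS, hpab⟩ := hp
      obtain ⟨h1, h2, h3⟩ := (hmemS p).mp hpS
      have hc := h3 1 (by decide)
      subst hpab
      rw [hQdef]
      simp only [Finset.mem_coe, Finset.mem_filter, Finset.mem_product]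
      exact ⟨⟨h1 1, h2 1⟩, hc⟩
    · intro p hp p' hp' hpp'
      rw [Finset.mem_coe, Finset.mem_filter] at hp hp'
      have h0 : (p.1 0, p.2 0) = (p'.1 0, p'.2 0) := by rw [hp.2, hp'.2]
      have e1 : p.1 = p'.1 := by
        funext i
        fin_cases i
        · exact congrArg Prod.fst h0
        · exact congrArg Prod.fst hpp'
      have e2 : p.2 = p'.2 := by
        funext i
        fin_cases i
        · exact congrArg Prod.snd h0
        · exact congrArg Prod.snd hpp'
      exact Prod.ext e1 e2
  have hex : ∃ ab ∈ 𝓔 ×ˢ 𝓔, (m + 2) * (m + 1) * 𝓔.card ≤ (Q ab).card := by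
    by_contra hcon
    push_neg at hcon
    have hlt : ∑ ab ∈ 𝓔 ×ˢ 𝓔, (Q ab).card <
        ∑ _ab ∈ 𝓔 ×ˢ 𝓔, (m + 2) * (m + 1) * 𝓔.card :=
      Finset.sum_lt_sum_of_nonempty (h𝓔.product h𝓔) hcon
    have h1 : S.card ≤ ∑ ab ∈ 𝓔 ×ˢ 𝓔, (Q ab).card := by
      rw [hsum]; exact Finset.sum_le_sum fun ab _ => hfib ab
    have h2 : ∑ _ab ∈ 𝓔 ×ˢ 𝓔, (m + 2) * (m + 1) * 𝓔.card
        = (m + 2) * (m + 1) * 𝓔.card ^ 3 := by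
      rw [Finset.sum_const, Finset.card_product, smul_eq_mul]; ring
    rw [hN] at hS
    omega
  obtain ⟨ab, habE, habN⟩ := hex
  have habE' := Finset.mem_product.mp habE
  have hQB : ∀ q ∈ Q ab, q.1 ∈ 𝓔 ∧ q.2 ∈ 𝓔 := by
    intro q hq
    simp only [hQdef, Finset.mem_filter, Finset.mem_product] at hq
    exact hq.1
  have hQcond : ∀ q ∈ Q ab,
      norm2 (q.2 - ab.2) = r * norm2 (q.1 - ab.1) ∧ r * norm2 (q.1 - ab.1) ≠ 0 := by
    intro q hq
    simp only [hQdef, Finset.mem_filter] at hq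
    exact hq.2
  have hQne : ∀ q ∈ Q ab, q.1 ≠ ab.1 ∧ q.2 ≠ ab.2 := by
    intro q hq
    obtain ⟨heq, hne⟩ := hQcond q hq
    constructor
    · intro h; apply hne; rw [h, sub_self, norm2_zero_aux, mul_zero]
    · intro h; apply hne; rw [← heq, h, sub_self, norm2_zero_aux]
  have hltQ : (m + 1) * (2 * 𝓔.card - 1) < (Q ab).card := by
    refine lt_of_lt_of_le ?_ habN
    rw [he]
    have h1 : 2 * (e + 1) - 1 = 2 * e + 1 := by omega
    rw [h1]
    have h2 : 2 * e + 1 < (m + 2) * (e + 1) := by nlinarith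
    calc (m + 1) * (2 * e + 1) < (m + 1) * ((m + 2) * (e + 1)) :=
          mul_lt_mul_of_pos_left h2 (Nat.succ_pos m)
      _ = (m + 2) * (m + 1) * (e + 1) := by ring
  obtain ⟨g, hgmem, hgdist⟩ := matching_lemma 𝓔 (m + 1) (Q ab) hQB hltQ
  refine ⟨Fin.cons ab.1 (fun i => (g i).1), Fin.cons ab.2 (fun i => (g i).2),
    ?_, ?_, ?_, ?_, ?_⟩
  · intro i j hij
    rcases Fin.eq_zero_or_eq_succ i with rfl | ⟨i', rfl⟩ <;>
      rcases Fin.eq_zero_or_eq_succ j with rfl | ⟨j', rfl⟩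
    · rfl
    · simp only [Fin.cons_zero, Fin.cons_succ] at hij
      exact absurd hij.symm (hQne _ (hgmem j')).1
    · simp only [Fin.cons_zero, Fin.cons_succ] at hij
      exact absurd hij (hQne _ (hgmem i')).1
    · simp only [Fin.cons_succ] at hij
      by_contra hcon
      exact (hgdist i' j' (fun h => hcon (congrArg Fin.succ h))).1 hij
  · intro i j hij
    rcases Fin.eq_zero_or_eq_succ i with rfl | ⟨i', rfl⟩ <;>
      rcases Fin.eq_zero_or_eq_succ j with rfl | ⟨j', rfl⟩
    · rfl
    · simp only [Fin.cons_zero, Fin.cons_succ] at hij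
      exact absurd hij.symm (hQne _ (hgmem j')).2
    · simp only [Fin.cons_zero, Fin.cons_succ] at hij
      exact absurd hij (hQne _ (hgmem i')).2
    · simp only [Fin.cons_succ] at hij
      by_contra hcon
      exact (hgdist i' j' (fun h => hcon (congrArg Fin.succ h))).2 hij
  · intro i
    rcases Fin.eq_zero_or_eq_succ i with rfl | ⟨i', rfl⟩
    · simpa using habE'.1
    · simpa using (hQB _ (hgmem i')).1
  · intro i
    rcases Fin.eq_zero_or_eq_succ i with rfl | ⟨i', rfl⟩
    · simpa using habE'.2
    · simpa using (hQB _ (hgmem i')).2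
  · intro i hi
    obtain ⟨i', rfl⟩ := (Fin.eq_zero_or_eq_succ i).resolve_left hi
    simp only [Fin.cons_zero, Fin.cons_succ]
    exact hQcond _ (hgmem i')
end

section
/- Let q be an odd prime power, d ≥ 2, 𝓔 ⊆ F_q^d a finite set, and r ∈ F_q. Then the number of tuples (x_1, x_2, x_3, x_4, x_5, y_1, y_2, y_3, y_4, y_5) ∈ P_4(r) satisfying x_2 = x_4 and y_2 ≠ y_4 is at most |𝓔|^3 · |P_1(r)| · min{q^(d−1), |𝓔|} · min{(3/2)·q^(d−1), |𝓔|}. -/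
open scoped Classical

/-- `P_k(r)`: tuples `(x₁, …, x_{k+1}, y₁, …, y_{k+1}) ∈ 𝓔^{2k+2}` with
`‖y_{i+1} − y_i‖ = r‖x_{i+1} − x_i‖ ≠ 0` for all `i = 1, …, k`. -/

noncomputable def Pset {F : Type*} [Field F] [Fintype F] {d : ℕ}
    (𝓔 : Finset (Fin d → F)) (k : ℕ) (r : F) :
    Finset ((Fin (k + 1) → Fin d → F) × (Fin (k + 1) → Fin d → F)) :=
  Finset.univ.filter fun p =>
    (∀ i, p.1 i ∈ 𝓔) ∧ (∀ i, p.2 i ∈ 𝓔) ∧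
    ∀ i : Fin k,
      norm2 (p.2 i.succ - p.2 i.castSucc) = r * norm2 (p.1 i.succ - p.1 i.castSucc) ∧
      r * norm2 (p.1 i.succ - p.1 i.castSucc) ≠ 0

namespace Star13

open Finset Polynomial

variable {F : Type*} [Field F] [Fintype F]

theorem ringChar_ne_two (hodd : Odd (Fintype.card F)) : ringChar F ≠ 2 := by
  intro h
  have h2 := FiniteField.even_card_of_char_two h
  obtain ⟨m, hm⟩ := hodd
  omega

theorem two_ne_zero' (hodd : Odd (Fintype.card F)) : (2 : F) ≠ 0 :=
  Ring.two_ne_zero (ringChar_ne_two hodd)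

theorem sq_add_sq' (hodd : Odd (Fintype.card F)) (x : F) : ∃ a b : F, a ^ 2 + b ^ 2 = x := by
  obtain ⟨a, b, hab⟩ : ∃ a b, (X ^ 2 : F[X]).eval a + (X ^ 2 - C x).eval b = 0 :=
    FiniteField.exists_root_sum_quadratic (degree_X_pow 2)
      (degree_X_pow_sub_C (by norm_num) _) (Nat.odd_iff.mp hodd)
  refine ⟨a, b, ?_⟩
  simp only [eval_pow, eval_X, eval_sub, eval_C] at hab
  linear_combination hab

theorem norm2_neg {d : ℕ} (v : Fin d → F) : norm2 (-v) = norm2 v := by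
  unfold norm2
  refine Finset.sum_congr rfl fun i _ => ?_
  rw [Pi.neg_apply, neg_sq]

/-- counting pairs fiberwise over the second coordinate -/
theorem card_filter_prod_eq_sum {α β : Type*} [Fintype α] [Fintype β] (P : α → β → Prop) :
    (Finset.univ.filter fun z : α × β => P z.1 z.2).card
      = ∑ b : β, (Finset.univ.filter fun a : α => P a b).card := by
  classical
  rw [Finset.card_eq_sum_card_fiberwise (f := fun z : α × β => z.2) (t := Finset.univ)
    (fun _ _ => Finset.mem_univ _)]
  refine Finset.sum_congr rfl fun b _ => ?_
  refine Finset.card_bij (fun z _ => z.1) ?_ ?_ ?_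
  · intro z hz
    simp only [Finset.mem_filter, Finset.mem_univ, true_and] at hz ⊢
    exact hz.2 ▸ hz.1
  · intro z hz z' hz' h
    simp only [Finset.mem_filter, Finset.mem_univ, true_and] at hz hz'
    exact Prod.ext h (hz.2.trans hz'.2.symm)
  · intro a ha
    simp only [Finset.mem_filter, Finset.mem_univ, true_and] at ha
    exact ⟨(a, b), by simp [ha]⟩

/-- number of points on the "circle" `a² + b² = t` -/
noncomputable def N2 (F : Type*) [Field F] [Fintype F] (t : F) : ℕ :=
  (Finset.univ.filter fun ab : F × F => ab.1 ^ 2 + ab.2 ^ 2 = t).card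

/-- number of points on the sphere `‖v‖ = t` in `F^k` -/
noncomputable def sph (F : Type*) [Field F] [Fintype F] (k : ℕ) (t : F) : ℕ :=
  (Finset.univ.filter fun v : Fin k → F => norm2 v = t).card

theorem N2_le_mul (s x y : F) (hxy : x ^ 2 + y ^ 2 ≠ 0) :
    N2 F s ≤ N2 F (s * (x ^ 2 + y ^ 2)) := by
  apply Finset.card_le_card_of_injOn (fun ab => (ab.1 * x - ab.2 * y, ab.1 * y + ab.2 * x))
  · intro ab hab
    simp only [Finset.mem_coe, Finset.mem_filter, Finset.mem_univ, true_and] at hab ⊢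
    rw [← hab]; ring
  · intro a _ b _ hab
    simp only [Prod.mk.injEq] at hab
    obtain ⟨h1, h2⟩ := hab
    have e1 : (a.1 - b.1) * x = (a.2 - b.2) * y := by linear_combination h1
    have e2 : (a.1 - b.1) * y = -((a.2 - b.2) * x) := by linear_combination h2
    have k1 : (a.1 - b.1) * (x ^ 2 + y ^ 2) = 0 := by linear_combination x * e1 + y * e2
    have k2 : (a.2 - b.2) * (x ^ 2 + y ^ 2) = 0 := by linear_combination x * e2 - y * e1
    have ha1 : a.1 = b.1 := by
      rcases mul_eq_zero.mp k1 with h | h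
      · exact sub_eq_zero.mp h
      · exact absurd h hxy
    have ha2 : a.2 = b.2 := by
      rcases mul_eq_zero.mp k2 with h | h
      · exact sub_eq_zero.mp h
      · exact absurd h hxy
    exact Prod.ext ha1 ha2

theorem N2_const (hodd : Odd (Fintype.card F)) {t : F} (ht : t ≠ 0) : N2 F t = N2 F 1 := by
  obtain ⟨x, y, hxy⟩ := sq_add_sq' hodd t
  have hx : x ^ 2 + y ^ 2 ≠ 0 := by rw [hxy]; exact ht
  have h1 : N2 F 1 ≤ N2 F t := by
    have := N2_le_mul (F := F) 1 x y hx
    rwa [one_mul, hxy] at this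
  have h2 : N2 F t ≤ N2 F 1 := by
    have hinv : (x / t) ^ 2 + (-y / t) ^ 2 = 1 / t := by
      field_simp
      linear_combination hxy
    have hx2 : (x / t) ^ 2 + (-y / t) ^ 2 ≠ 0 := by
      rw [hinv]
      exact one_div_ne_zero ht
    have := N2_le_mul t (x / t) (-y / t) hx2
    rw [hinv] at this
    rw [show t * (1 / t) = 1 from by field_simp] at this
    exact this
  omega

theorem N2_sum_eq : ∑ t : F, N2 F t = Fintype.card F ^ 2 := by
  classical
  have h2 : Fintype.card F * Fintype.card F = ∑ t : F, N2 F t := by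
    rw [← Fintype.card_prod, ← Finset.card_univ]
    exact Finset.card_eq_sum_card_fiberwise (fun _ _ => Finset.mem_univ _)
  rw [← h2, sq]

theorem N2_zero_sq (hodd : Odd (Fintype.card F)) (h : IsSquare (-1 : F)) :
    N2 F 0 = 2 * Fintype.card F - 1 := by
  obtain ⟨i, hi⟩ := h
  have hi0 : i ≠ 0 := by
    rintro rfl
    rw [mul_zero] at hi
    simp at hi
  have key : ∀ b : F, (Finset.univ.filter fun a : F => a ^ 2 + b ^ 2 = 0).card
      = if b = 0 then 1 else 2 := by
    intro b
    by_cases hb : b = 0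
    · subst hb; rw [if_pos rfl]
      have he : (Finset.univ.filter fun a : F => a ^ 2 + (0:F) ^ 2 = 0) = {0} := by
        ext a
        simp only [Finset.mem_filter, Finset.mem_univ, true_and, Finset.mem_singleton]
        constructor
        · intro ha
          have : a ^ 2 = 0 := by linear_combination ha
          exact pow_eq_zero_iff (two_ne_zero) |>.mp this
        · rintro rfl; ring
      rw [he, Finset.card_singleton]
    · rw [if_neg hb]
      have hfe : (Finset.univ.filter fun a : F => a ^ 2 + b ^ 2 = 0)
          = {i * b, -(i * b)} := by
        ext a
        simp only [Finset.mem_filter, Finset.mem_univ, true_and, Finset.mem_insert,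
          Finset.mem_singleton]
        constructor
        · intro ha
          have h2 : (a - i * b) * (a + i * b) = 0 := by linear_combination ha + b ^ 2 * hi
          rcases mul_eq_zero.mp h2 with h3 | h3
          · exact Or.inl (sub_eq_zero.mp h3)
          · exact Or.inr (eq_neg_of_add_eq_zero_left h3)
        · rintro (rfl | rfl)
          · linear_combination (-(b ^ 2)) * hi
          · linear_combination (-(b ^ 2)) * hi
      rw [hfe, Finset.card_insert_of_notMem, Finset.card_singleton]
      simp only [Finset.mem_singleton]
      intro hcon
      have h2 : (2 : F) * (i * b) = 0 := by linear_combination hcon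
      rcases mul_eq_zero.mp h2 with h | h
      · exact two_ne_zero' hodd h
      · exact (mul_ne_zero hi0 hb) h
  have hN : N2 F 0 = ∑ b : F, (Finset.univ.filter fun a : F => a ^ 2 + b ^ 2 = 0).card :=
    card_filter_prod_eq_sum (fun a b : F => a ^ 2 + b ^ 2 = (0:F))
  rw [hN, Finset.sum_congr rfl fun b _ => key b,
    ← Finset.add_sum_erase _ _ (Finset.mem_univ (0 : F)), if_pos rfl]
  have herase : ∑ b ∈ Finset.univ.erase (0:F), (if b = 0 then 1 else 2)
      = (Fintype.card F - 1) * 2 := by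
    rw [Finset.sum_congr rfl fun b hb => if_neg (Finset.mem_erase.mp hb).1,
      Finset.sum_const, Finset.card_erase_of_mem (Finset.mem_univ _), Finset.card_univ,
      smul_eq_mul]
  rw [herase]
  have hq1 : 1 ≤ Fintype.card F := Fintype.card_pos
  omega

theorem N2_zero_nonsq (h : ¬ IsSquare (-1 : F)) : N2 F 0 = 1 := by
  have he : (Finset.univ.filter fun ab : F × F => ab.1 ^ 2 + ab.2 ^ 2 = 0)
      = {((0:F), (0:F))} := by
    ext z
    simp only [Finset.mem_filter, Finset.mem_univ, true_and, Finset.mem_singleton]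
    constructor
    · intro hz
      have hz2 : z.2 = 0 := by
        by_contra hb
        apply h
        refine ⟨z.1 * z.2⁻¹, ?_⟩
        field_simp
        linear_combination -hz
      have hz1 : z.1 = 0 := by
        have : z.1 ^ 2 = 0 := by rw [hz2] at hz; linear_combination hz
        exact pow_eq_zero_iff (two_ne_zero) |>.mp this
      exact Prod.ext hz1 hz2
    · rintro rfl
      norm_num
  show (Finset.univ.filter fun ab : F × F => ab.1 ^ 2 + ab.2 ^ 2 = 0).card = 1
  rw [he, Finset.card_singleton]

theorem N2_spec (hodd : Odd (Fintype.card F)) :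
    ∃ ε : ℤ, (ε = 1 ∨ ε = -1) ∧ (∀ u : F, u ≠ 0 → (N2 F u : ℤ) = (Fintype.card F : ℤ) - ε) ∧
      (N2 F 0 : ℤ) = (Fintype.card F : ℤ) + ε * ((Fintype.card F : ℤ) - 1) := by
  have hq1 : (1 : ℤ) < (Fintype.card F : ℤ) := by exact_mod_cast Fintype.one_lt_card
  have hsum : (N2 F 0 : ℤ) + ((Fintype.card F : ℤ) - 1) * (N2 F 1 : ℤ)
      = (Fintype.card F : ℤ) ^ 2 := by
    have h1 : ∑ t : F, (N2 F t : ℤ) = ((Fintype.card F : ℤ)) ^ 2 := by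
      have := N2_sum_eq (F := F)
      exact_mod_cast congrArg (fun n : ℕ => (n : ℤ)) this
    rw [← Finset.add_sum_erase _ _ (Finset.mem_univ (0 : F))] at h1
    rw [Finset.sum_congr rfl (fun u hu => by
      rw [N2_const hodd (Finset.mem_erase.mp hu).1])] at h1
    rw [Finset.sum_const, Finset.card_erase_of_mem (Finset.mem_univ _), Finset.card_univ,
      nsmul_eq_mul, Nat.cast_sub Fintype.card_pos, Nat.cast_one] at h1
    linarith [h1]
  by_cases hsq : IsSquare (-1 : F)
  · have h0 : (N2 F 0 : ℤ) = 2 * (Fintype.card F : ℤ) - 1 := by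
      have := N2_zero_sq hodd hsq
      have hq1' : 1 ≤ Fintype.card F := Fintype.card_pos
      omega
    have hN1 : (N2 F 1 : ℤ) = (Fintype.card F : ℤ) - 1 := by
      have hcancel : ((Fintype.card F : ℤ) - 1) * (N2 F 1 : ℤ)
          = ((Fintype.card F : ℤ) - 1) * ((Fintype.card F : ℤ) - 1) := by
        linear_combination hsum - h0
      exact mul_left_cancel₀ (by omega) hcancel
    refine ⟨1, Or.inl rfl, fun u hu => ?_, ?_⟩
    · rw [N2_const hodd hu, hN1]
    · rw [h0]; ring
  · have h0 : (N2 F 0 : ℤ) = 1 := by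
      rw [N2_zero_nonsq hsq]; norm_num
    have hN1 : (N2 F 1 : ℤ) = (Fintype.card F : ℤ) + 1 := by
      have hcancel : ((Fintype.card F : ℤ) - 1) * (N2 F 1 : ℤ)
          = ((Fintype.card F : ℤ) - 1) * ((Fintype.card F : ℤ) + 1) := by
        linear_combination hsum - h0
      exact mul_left_cancel₀ (by omega) hcancel
    refine ⟨-1, Or.inr rfl, fun u hu => ?_, ?_⟩
    · rw [N2_const hodd hu, hN1]; ring
    · rw [h0]; ring

theorem norm2_split {k : ℕ} (v : Fin (k + 2) → F) :
    norm2 v = (v 0 ^ 2 + v 1 ^ 2) + norm2 (fun i : Fin k => v i.succ.succ) := by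
  unfold norm2
  rw [Fin.sum_univ_succ, Fin.sum_univ_succ]
  rw [Fin.succ_zero_eq_one]
  ring

theorem sph_add_two (k : ℕ) (t : F) :
    sph F (k + 2) t = ∑ w : Fin k → F, N2 F (t - norm2 w) := by
  classical
  have step1 : sph F (k + 2) t
      = (Finset.univ.filter fun z : (F × F) × (Fin k → F) =>
          (z.1.1 ^ 2 + z.1.2 ^ 2) + norm2 z.2 = t).card := by
    refine Finset.card_bij (fun v _ => ((v 0, v 1), fun i => v i.succ.succ)) ?_ ?_ ?_
    · intro v hv
      simp only [Finset.mem_filter, Finset.mem_univ, true_and] at hv ⊢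
      rw [← norm2_split]; exact hv
    · intro v _ v' _ h
      simp only [Prod.mk.injEq] at h
      obtain ⟨⟨h0, h1⟩, h2⟩ := h
      funext i
      refine Fin.cases h0 (fun j => ?_) i
      refine Fin.cases ?_ (fun j' => ?_) j
      · exact h1
      · exact congrFun h2 j'
    · intro z hz
      simp only [Finset.mem_filter, Finset.mem_univ, true_and] at hz
      refine ⟨Fin.cons z.1.1 (Fin.cons z.1.2 z.2), ?_, ?_⟩
      · simp only [Finset.mem_filter, Finset.mem_univ, true_and]
        rw [norm2_split]
        simp only [Fin.cons_zero, Fin.cons_succ]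
        rw [show (Fin.cons z.1.1 (Fin.cons z.1.2 z.2) : Fin (k+2) → F) 1 = z.1.2 from by
          rw [← Fin.succ_zero_eq_one, Fin.cons_succ, Fin.cons_zero]]
        exact hz
      · have h0c : (Fin.cons z.1.1 (Fin.cons z.1.2 z.2) : Fin (k + 2) → F) 0 = z.1.1 :=
          Fin.cons_zero _ _
        have h1c : (Fin.cons z.1.1 (Fin.cons z.1.2 z.2) : Fin (k + 2) → F) 1 = z.1.2 := by
          rw [← Fin.succ_zero_eq_one, Fin.cons_succ, Fin.cons_zero]
        have h2c : (fun i : Fin k =>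
            (Fin.cons z.1.1 (Fin.cons z.1.2 z.2) : Fin (k + 2) → F) i.succ.succ) = z.2 := by
          funext j
          rw [Fin.cons_succ, Fin.cons_succ]
        exact Prod.ext (Prod.ext h0c h1c) h2c
  rw [step1]
  rw [card_filter_prod_eq_sum (fun ab : F × F => fun w : Fin k → F =>
    (ab.1 ^ 2 + ab.2 ^ 2) + norm2 w = t)]
  refine Finset.sum_congr rfl fun w _ => ?_
  unfold N2
  refine congrArg Finset.card (Finset.filter_congr fun ab _ => ?_)
  constructor
  · intro h; linear_combination h
  · intro h; linear_combination h

theorem sph_zero {t : F} (ht : t ≠ 0) : sph F 0 t = 0 := by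
  unfold sph
  rw [Finset.card_eq_zero, Finset.filter_eq_empty_iff]
  intro v _
  unfold norm2
  simpa using fun h => ht h.symm

theorem sph_one_le (t : F) : sph F 1 t ≤ 2 := by
  unfold sph
  rcases Finset.eq_empty_or_nonempty
      (Finset.univ.filter fun v : Fin 1 → F => norm2 v = t) with he | ⟨s, hs⟩
  · rw [he]; simp
  have hs' := (Finset.mem_filter.mp hs).2
  have hsub : (Finset.univ.filter fun v : Fin 1 → F => norm2 v = t)
      ⊆ ({s, -s} : Finset (Fin 1 → F)) := by
    intro v hv
    have hv' := (Finset.mem_filter.mp hv).2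
    have hvs : v 0 ^ 2 = s 0 ^ 2 := by
      have h1 : norm2 v = v 0 ^ 2 := Fin.sum_univ_one _
      have h2 : norm2 s = s 0 ^ 2 := Fin.sum_univ_one _
      rw [← h1, ← h2, hv', hs']
    have h3 : (v 0 - s 0) * (v 0 + s 0) = 0 := by linear_combination hvs
    simp only [Finset.mem_insert, Finset.mem_singleton]
    rcases mul_eq_zero.mp h3 with h4 | h4
    · left
      funext i
      have hi0 : i = 0 := Subsingleton.elim i 0
      rw [hi0]
      exact sub_eq_zero.mp h4
    · right
      funext i
      have hi0 : i = 0 := Subsingleton.elim i 0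
      rw [hi0, Pi.neg_apply]
      linear_combination h4
  exact le_trans (Finset.card_le_card hsub) (le_trans (Finset.card_insert_le _ _) (by simp))

theorem sph_rec (hodd : Odd (Fintype.card F)) {ε : ℤ}
    (hne : ∀ u : F, u ≠ 0 → (N2 F u : ℤ) = (Fintype.card F : ℤ) - ε)
    (h0 : (N2 F 0 : ℤ) = (Fintype.card F : ℤ) + ε * ((Fintype.card F : ℤ) - 1))
    (k : ℕ) (t : F) :
    (sph F (k + 2) t : ℤ) = ((Fintype.card F : ℤ) - ε) * (Fintype.card F : ℤ) ^ k
      + ε * (Fintype.card F : ℤ) * (sph F k t : ℤ) := by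
  classical
  rw [sph_add_two]
  push_cast
  rw [Finset.sum_congr rfl (fun w _ => show (N2 F (t - norm2 w) : ℤ)
      = ((Fintype.card F : ℤ) - ε) + if norm2 w = t then ε * (Fintype.card F : ℤ) else 0 from by
    by_cases h : norm2 w = t
    · rw [if_pos h, h, sub_self, h0]; ring
    · rw [if_neg h, hne _ (sub_ne_zero.mpr fun he => h he.symm)]; ring)]
  rw [Finset.sum_add_distrib, Finset.sum_const, ← Finset.sum_filter, Finset.sum_const]
  have hcard : (Finset.univ : Finset (Fin k → F)).card = Fintype.card F ^ k := by
    rw [Finset.card_univ, Fintype.card_fun, Fintype.card_fin]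
  have hfil : (Finset.univ.filter fun w : Fin k → F => norm2 w = t).card = sph F k t := rfl
  rw [hcard, hfil]
  push_cast
  ring

theorem sph_bound (hodd : Odd (Fintype.card F)) (k : ℕ) {t : F} (ht : t ≠ 0) :
    (sph F (k + 2) t : ℤ) ≤ (Fintype.card F : ℤ) ^ (k + 1) + (Fintype.card F : ℤ) ^ k := by
  obtain ⟨ε, hε1, hne, h0⟩ := N2_spec hodd
  have hq2 : (2 : ℤ) ≤ (Fintype.card F : ℤ) := by exact_mod_cast Fintype.one_lt_card
  suffices H : ∀ m : ℕ,
      (∀ s : F, s ≠ 0 → (sph F (m + 2) s : ℤ)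
        ≤ (Fintype.card F : ℤ) ^ (m + 1) + (Fintype.card F : ℤ) ^ m)
      ∧ (∀ s : F, s ≠ 0 → (sph F (m + 3) s : ℤ)
        ≤ (Fintype.card F : ℤ) ^ (m + 2) + (Fintype.card F : ℤ) ^ (m + 1)) by
    exact (H k).1 t ht
  intro m
  induction m with
  | zero =>
    constructor
    · intro s hs
      rw [sph_rec hodd hne h0 0 s, sph_zero hs]
      rcases hε1 with h | h <;> rw [h] <;> push_cast <;> nlinarith [hq2]
    · intro s hs
      rw [show (3 : ℕ) = 1 + 2 from rfl, sph_rec hodd hne h0 1 s]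
      have h1'' : (sph F 1 s : ℤ) ≤ 2 := by exact_mod_cast sph_one_le (F := F) s
      have h1' : (0:ℤ) ≤ (sph F 1 s : ℤ) := Int.natCast_nonneg _
      have hq0 : (0:ℤ) ≤ (Fintype.card F : ℤ) := by linarith
      have hmulS : (Fintype.card F : ℤ) * (sph F 1 s : ℤ) ≤ (Fintype.card F : ℤ) * 2 :=
        mul_le_mul_of_nonneg_left h1'' hq0
      have hmulS0 : (0:ℤ) ≤ (Fintype.card F : ℤ) * (sph F 1 s : ℤ) := mul_nonneg hq0 h1'
      rcases hε1 with h | h <;> rw [h] <;> ring_nf <;> nlinarith [hq2, hmulS, hmulS0]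
  | succ n ih =>
    refine ⟨ih.2, ?_⟩
    intro s hs
    rw [show n + 1 + 3 = (n + 2) + 2 from by omega, sph_rec hodd hne h0 (n + 2) s]
    have hih := ih.1 s hs
    have hpos : (0:ℤ) ≤ (sph F (n + 2) s : ℤ) := Int.natCast_nonneg _
    have hq0 : (0:ℤ) ≤ (Fintype.card F : ℤ) := by omega
    have hmul : (Fintype.card F : ℤ) * (sph F (n + 2) s : ℤ)
        ≤ (Fintype.card F : ℤ) * ((Fintype.card F : ℤ) ^ (n + 1) + (Fintype.card F : ℤ) ^ n) :=
      mul_le_mul_of_nonneg_left hih hq0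
    have e1 : (Fintype.card F : ℤ) ^ (n + 1) = (Fintype.card F : ℤ) ^ n * (Fintype.card F : ℤ) :=
      pow_succ _ _
    have e2 : (Fintype.card F : ℤ) ^ (n + 2)
        = (Fintype.card F : ℤ) ^ (n + 1) * (Fintype.card F : ℤ) := pow_succ _ _
    have e3 : (Fintype.card F : ℤ) ^ (n + 1 + 2)
        = (Fintype.card F : ℤ) ^ (n + 2) * (Fintype.card F : ℤ) := pow_succ _ _
    have e4 : (Fintype.card F : ℤ) ^ (n + 1 + 1) = (Fintype.card F : ℤ) ^ (n + 2) := by norm_num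
    have hp1 : (0:ℤ) < (Fintype.card F : ℤ) ^ (n + 1) := pow_pos (by omega) _
    have hp0 : (0:ℤ) < (Fintype.card F : ℤ) ^ n := pow_pos (by omega) _
    rcases hε1 with h | h <;> rw [h] <;> nlinarith [hq2, hih, hpos, hmul, hp1, hp0]

/-- Sphere of nonzero radius in `F^d`, `d ≥ 2`, has at most `(3/2) q^(d-1)` points. -/
theorem sphere_card_le (hodd : Odd (Fintype.card F)) {d : ℕ} (hd : 2 ≤ d) (c : Fin d → F)
    {R : F} (hR : R ≠ 0) :
    ((Finset.univ.filter fun v : Fin d → F => norm2 (c - v) = R).card : ℝ)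
      ≤ 3 / 2 * (Fintype.card F : ℝ) ^ (d - 1) := by
  obtain ⟨k, rfl⟩ : ∃ k, d = k + 2 := ⟨d - 2, by omega⟩
  have hcard : (Finset.univ.filter fun v : Fin (k + 2) → F => norm2 (c - v) = R).card
      = sph F (k + 2) R := by
    refine Finset.card_bij (fun v _ => c - v) ?_ ?_ ?_
    · intro v hv
      simp only [Finset.mem_filter, Finset.mem_univ, true_and] at hv ⊢
      exact hv
    · intro a _ b _ h
      have h' : c - a = c - b := h
      have hca : a = c - (c - a) := by ring
      rw [hca, h']
      ring
    · intro w hw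
      simp only [Finset.mem_filter, Finset.mem_univ, true_and] at hw
      exact ⟨c - w, by
        simp only [Finset.mem_filter, Finset.mem_univ, true_and]
        rw [show c - (c - w) = w from by ring]; exact hw, by ring⟩
  rw [hcard]
  have h1 : (sph F (k + 2) R : ℤ)
      ≤ (Fintype.card F : ℤ) ^ (k + 1) + (Fintype.card F : ℤ) ^ k := sph_bound hodd k hR
  have hq3 : (3 : ℝ) ≤ (Fintype.card F : ℝ) := by
    have h2 : 2 ≤ Fintype.card F := Fintype.one_lt_card
    obtain ⟨m, hm⟩ := hodd
    exact_mod_cast (by omega : 3 ≤ Fintype.card F)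
  have h1' : ((sph F (k + 2) R : ℝ))
      ≤ (Fintype.card F : ℝ) ^ (k + 1) + (Fintype.card F : ℝ) ^ k := by exact_mod_cast h1
  have hd1 : k + 2 - 1 = k + 1 := rfl
  rw [hd1]
  have hpk : (0:ℝ) ≤ (Fintype.card F : ℝ) ^ k := by positivity
  calc ((sph F (k + 2) R : ℝ)) ≤ (Fintype.card F : ℝ) ^ (k + 1) + (Fintype.card F : ℝ) ^ k := h1'
    _ ≤ 3 / 2 * (Fintype.card F : ℝ) ^ (k + 1) := by
        rw [pow_succ]
        nlinarith [hpk, hq3]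

/-- The perpendicular bisector set has at most `q^(d-1)` points. -/
theorem bisector_card_le (hodd : Odd (Fintype.card F)) {d : ℕ}
    {u w : Fin d → F} (huw : u ≠ w) :
    ((Finset.univ.filter fun v : Fin d → F => norm2 (v - u) = norm2 (w - v)).card : ℝ)
      ≤ (Fintype.card F : ℝ) ^ (d - 1) := by
  classical
  obtain ⟨j, hj⟩ : ∃ j, u j ≠ w j := by
    by_contra hcon; push_neg at hcon; exact huw (funext hcon)
  have hcj0 : 2 * (w j - u j) ≠ 0 :=
    mul_ne_zero (two_ne_zero' hodd) (sub_ne_zero.mpr (Ne.symm hj))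
  have key : ∀ v : Fin d → F, norm2 (v - u) = norm2 (w - v) →
      ∑ i, 2 * (w i - u i) * v i = norm2 w - norm2 u := by
    intro v hv
    have expand : ∀ i : Fin d, 2 * (w i - u i) * v i
        = ((v - u) i ^ 2 - (w - v) i ^ 2) + ((w i) ^ 2 - (u i) ^ 2) := by
      intro i
      simp only [Pi.sub_apply]
      ring
    rw [Finset.sum_congr rfl fun i _ => expand i, Finset.sum_add_distrib,
      Finset.sum_sub_distrib, Finset.sum_sub_distrib]
    have h1 : ∑ i, (v - u) i ^ 2 = norm2 (v - u) := rfl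
    have h2 : ∑ i, (w - v) i ^ 2 = norm2 (w - v) := rfl
    have h3 : ∑ i, (w i) ^ 2 = norm2 w := rfl
    have h4 : ∑ i, (u i) ^ 2 = norm2 u := rfl
    rw [h1, h2, h3, h4, hv]
    ring
  have hinj : ((Finset.univ.filter fun v : Fin d → F =>
      norm2 (v - u) = norm2 (w - v))).card ≤ Fintype.card ({i : Fin d // i ≠ j} → F) := by
    rw [← Finset.card_univ]
    apply Finset.card_le_card_of_injOn (fun v => fun i : {i : Fin d // i ≠ j} => v i.1)
      (fun _ _ => Finset.mem_univ _)
    intro a ha b hb hab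
    simp only [Finset.coe_filter, Set.mem_setOf_eq, Finset.mem_univ, true_and] at ha hb
    have ha' := key a ha
    have hb' := key b hb
    have heq : ∀ i : Fin d, i ≠ j → a i = b i := fun i hi => congrFun hab ⟨i, hi⟩
    have hsa : ∑ i, 2 * (w i - u i) * a i
        = 2 * (w j - u j) * a j + ∑ i ∈ Finset.univ.erase j, 2 * (w i - u i) * a i :=
      (Finset.add_sum_erase _ _ (Finset.mem_univ j)).symm
    have hsb : ∑ i, 2 * (w i - u i) * b i
        = 2 * (w j - u j) * b j + ∑ i ∈ Finset.univ.erase j, 2 * (w i - u i) * b i :=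
      (Finset.add_sum_erase _ _ (Finset.mem_univ j)).symm
    have herase : ∑ i ∈ Finset.univ.erase j, 2 * (w i - u i) * a i
        = ∑ i ∈ Finset.univ.erase j, 2 * (w i - u i) * b i :=
      Finset.sum_congr rfl fun i hi => by rw [heq i (Finset.mem_erase.mp hi).1]
    have hj2 : 2 * (w j - u j) * a j = 2 * (w j - u j) * b j := by
      have hx := ha'.trans hb'.symm
      rw [hsa, hsb] at hx
      linear_combination hx - herase
    have haj : a j = b j := mul_left_cancel₀ hcj0 hj2
    funext i
    by_cases hij : i = j
    · rw [hij]; exact haj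
    · exact heq i hij
  have hcards : Fintype.card ({i : Fin d // i ≠ j} → F) = Fintype.card F ^ (d - 1) := by
    rw [Fintype.card_fun]
    congr 1
    rw [Fintype.card_subtype_compl, Fintype.card_subtype_eq, Fintype.card_fin]
  rw [hcards] at hinj
  calc ((Finset.univ.filter fun v : Fin d → F =>
        norm2 (v - u) = norm2 (w - v)).card : ℝ)
      ≤ ((Fintype.card F ^ (d - 1) : ℕ) : ℝ) := by exact_mod_cast hinj
    _ = (Fintype.card F : ℝ) ^ (d - 1) := by push_cast; ring

end Star13



/-- Auxiliary projection used in the double-counting argument. -/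
def mainφ {F : Type*} [Field F] {d : ℕ} :
    ((Fin 5 → Fin d → F) × (Fin 5 → Fin d → F)) →
      (((Fin 2 → Fin d → F) × (Fin 2 → Fin d → F)) ×
        ((Fin d → F) × (Fin d → F) × (Fin d → F))) :=
  fun p => ((fun i => p.1 (Fin.castLE (by omega) i), fun i => p.2 (Fin.castLE (by omega) i)),
    (p.1 2, p.1 4, p.2 4))

/-- For `d ≥ 2`, the number of tuples in `P_4(r)` with `x₂ = x₄` and
`y₂ ≠ y₄` is at most `|𝓔|³·|P_1(r)|·min{q^(d−1), |𝓔|}·min{(3/2)·q^(d−1), |𝓔|}`. -/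
theorem Pset_deg24_x_card_le {F : Type*} [Field F] [Fintype F]
    (hodd : Odd (Fintype.card F))
    {d : ℕ} (hd : 2 ≤ d)
    (𝓔 : Finset (Fin d → F)) (r : F) :
    ((((Pset 𝓔 4 r).filter fun p => p.1 1 = p.1 3 ∧ p.2 1 ≠ p.2 3).card : ℝ))
      ≤ (𝓔.card : ℝ) ^ 3 * ((Pset 𝓔 1 r).card : ℝ)
        * min ((Fintype.card F : ℝ) ^ (d - 1)) (𝓔.card : ℝ)
        * min (3 / 2 * (Fintype.card F : ℝ) ^ (d - 1)) (𝓔.card : ℝ) := by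
  classical
  have hq3 : (0:ℝ) ≤ (Fintype.card F : ℝ) ^ (d - 1) := by positivity
  set M2 : ℝ := min ((Fintype.card F : ℝ) ^ (d - 1)) (𝓔.card : ℝ) with hM2def
  set M3 : ℝ := min (3 / 2 * (Fintype.card F : ℝ) ^ (d - 1)) (𝓔.card : ℝ) with hM3def
  have hM2 : 0 ≤ M2 := le_min hq3 (Nat.cast_nonneg _)
  have hM3 : 0 ≤ M3 := le_min (by positivity) (Nat.cast_nonneg _)
  set S := (Pset 𝓔 4 r).filter (fun p => p.1 1 = p.1 3 ∧ p.2 1 ≠ p.2 3) with hSdef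
  have hmem : ∀ p ∈ S, mainφ p ∈ (Pset 𝓔 1 r) ×ˢ (𝓔 ×ˢ 𝓔 ×ˢ 𝓔) := by
    intro p hp
    rw [hSdef, Finset.mem_filter] at hp
    obtain ⟨hp4, hx13, hy13⟩ := hp
    simp only [Pset, Finset.mem_filter] at hp4
    obtain ⟨-, hX, hY, hcond⟩ := hp4
    simp only [mainφ, Finset.mem_product]
    refine ⟨?_, hX 2, hX 4, hY 4⟩
    simp only [Pset, Finset.mem_filter]
    refine ⟨Finset.mem_univ _, fun i => hX _, fun i => hY _, fun i => ?_⟩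
    have hi : i = 0 := Subsingleton.elim i 0
    subst hi
    exact hcond 0
  have hsum := Finset.card_eq_sum_card_fiberwise hmem
  have hfib : ∀ b ∈ (Pset 𝓔 1 r) ×ˢ (𝓔 ×ˢ 𝓔 ×ˢ 𝓔),
      ((S.filter fun p => mainφ p = b).card : ℝ) ≤ M2 * M3 := by
    rintro ⟨⟨X, Y⟩, x2, x4, y4⟩ _hb
    by_cases hne : (S.filter fun p => mainφ p = ((X, Y), (x2, x4, y4))).Nonempty
    case neg =>
      rw [Finset.not_nonempty_iff_eq_empty] at hne
      rw [hne, Finset.card_empty]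
      push_cast
      exact mul_nonneg hM2 hM3
    case pos =>
    obtain ⟨p₀, hp₀⟩ := hne
    rw [Finset.mem_filter] at hp₀
    obtain ⟨hp₀S, hp₀φ⟩ := hp₀
    rw [hSdef, Finset.mem_filter] at hp₀S
    obtain ⟨hp₀4, hx13₀, hy13₀⟩ := hp₀S
    simp only [Pset, Finset.mem_filter] at hp₀4
    obtain ⟨-, -, -, hcond₀⟩ := hp₀4
    have hφ1 : p₀.1 1 = X 1 := congrFun (congrArg (fun z => z.1.1) hp₀φ) 1
    have hφ4 : p₀.1 4 = x4 := congrArg (fun z => z.2.2.1) hp₀φ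
    have hR0 : r * norm2 (x4 - X 1) ≠ 0 := by
      have h3' : r * norm2 (p₀.1 4 - p₀.1 3) ≠ 0 := (hcond₀ 3).2
      rw [← hφ4, ← hφ1, hx13₀]
      exact h3'
    set Sph := 𝓔.filter (fun y3 => norm2 (y4 - y3) = r * norm2 (x4 - X 1) ∧ Y 1 ≠ y3)
      with hSphdef
    set T := ((𝓔 ×ˢ 𝓔).filter fun z : (Fin d → F) × (Fin d → F) =>
        (norm2 (y4 - z.2) = r * norm2 (x4 - X 1) ∧ Y 1 ≠ z.2)
          ∧ norm2 (z.1 - Y 1) = norm2 (z.2 - z.1)) with hTdef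
    have hfibT : (S.filter fun p => mainφ p = ((X, Y), (x2, x4, y4))).card ≤ T.card := by
      apply Finset.card_le_card_of_injOn (fun p => (p.2 2, p.2 3))
      · intro p hp
        rw [Finset.mem_coe, Finset.mem_filter] at hp
        obtain ⟨hpS, hpφ⟩ := hp
        rw [hSdef, Finset.mem_filter] at hpS
        obtain ⟨hp4, hx13, hy13⟩ := hpS
        simp only [Pset, Finset.mem_filter] at hp4
        obtain ⟨-, hX4, hY4, hcond⟩ := hp4
        have hx1 : p.1 1 = X 1 := congrFun (congrArg (fun z => z.1.1) hpφ) 1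
        have hy1 : p.2 1 = Y 1 := congrFun (congrArg (fun z => z.1.2) hpφ) 1
        have hx4' : p.1 4 = x4 := congrArg (fun z => z.2.2.1) hpφ
        have hy4' : p.2 4 = y4 := congrArg (fun z => z.2.2.2) hpφ
        rw [Finset.mem_coe, hTdef, Finset.mem_filter, Finset.mem_product]
        refine ⟨⟨hY4 2, hY4 3⟩, ⟨?_, ?_⟩, ?_⟩
        · have h3 : norm2 (p.2 4 - p.2 3) = r * norm2 (p.1 4 - p.1 3) := (hcond 3).1
          rw [← hy4', ← hx4', ← hx1, hx13]
          exact h3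
        · rw [← hy1]; exact hy13
        · have h1 : norm2 (p.2 2 - p.2 1) = r * norm2 (p.1 2 - p.1 1) := (hcond 1).1
          have h2 : norm2 (p.2 3 - p.2 2) = r * norm2 (p.1 3 - p.1 2) := (hcond 2).1
          have hsym : norm2 (p.1 3 - p.1 2) = norm2 (p.1 2 - p.1 1) := by
            rw [← hx13, ← Star13.norm2_neg (p.1 2 - p.1 1), neg_sub]
          rw [← hy1, h1, h2, hsym]
      · intro p hp p' hp' hpp
        simp only [Finset.coe_filter, Set.mem_setOf_eq] at hp hp'
        obtain ⟨hpS, hpφ⟩ := hp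
        obtain ⟨hp'S, hp'φ⟩ := hp'
        rw [hSdef, Finset.mem_filter] at hpS hp'S
        obtain ⟨hp4, hx13, -⟩ := hpS
        obtain ⟨hp'4, hx13', -⟩ := hp'S
        simp only [Prod.mk.injEq] at hpp
        have hφeq : mainφ p = mainφ p' := hpφ.trans hp'φ.symm
        have h2' : p.1 2 = p'.1 2 := congrArg (fun z => z.2.1) hφeq
        have h4' : p.1 4 = p'.1 4 := congrArg (fun z => z.2.2.1) hφeq
        have hy4'' : p.2 4 = p'.2 4 := congrArg (fun z => z.2.2.2) hφeq
        have hx0 : p.1 0 = p'.1 0 := congrFun (congrArg (fun z => z.1.1) hφeq) 0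
        have hx1 : p.1 1 = p'.1 1 := congrFun (congrArg (fun z => z.1.1) hφeq) 1
        have hy0 : p.2 0 = p'.2 0 := congrFun (congrArg (fun z => z.1.2) hφeq) 0
        have hy1 : p.2 1 = p'.2 1 := congrFun (congrArg (fun z => z.1.2) hφeq) 1
        have hx3 : p.1 3 = p'.1 3 := by rw [← hx13, ← hx13']; exact hx1
        refine Prod.ext ?_ ?_
        · funext i
          fin_cases i
          · exact hx0
          · exact hx1
          · exact h2'
          · exact hx3
          · exact h4'
        · funext i
          fin_cases i
          · exact hy0
          · exact hy1
          · exact hpp.1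
          · exact hpp.2
          · exact hy4''
    have hTsub : ∀ z ∈ T, z.2 ∈ Sph := by
      intro z hz
      rw [hTdef, Finset.mem_filter, Finset.mem_product] at hz
      rw [hSphdef, Finset.mem_filter]
      exact ⟨hz.1.2, hz.2.1⟩
    have hTsum := Finset.card_eq_sum_card_fiberwise
      (f := fun z : (Fin d → F) × (Fin d → F) => z.2) (t := Sph) hTsub
    have hinner : ∀ y3 ∈ Sph, ((T.filter fun z => z.2 = y3).card : ℝ) ≤ M2 := by
      intro y3 hy3
      rw [hSphdef, Finset.mem_filter] at hy3
      obtain ⟨hy3E, hy3R, hy3ne⟩ := hy3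
      rw [hM2def]
      refine le_min ?_ ?_
      · have hle : (T.filter fun z => z.2 = y3).card
            ≤ (Finset.univ.filter fun v : Fin d → F =>
                norm2 (v - Y 1) = norm2 (y3 - v)).card := by
          apply Finset.card_le_card_of_injOn (fun z => z.1)
          · intro z hz
            rw [Finset.mem_coe, Finset.mem_filter, hTdef, Finset.mem_filter] at hz
            obtain ⟨⟨-, -, hz2⟩, hzy⟩ := hz
            rw [Finset.mem_coe, Finset.mem_filter]
            refine ⟨Finset.mem_univ _, ?_⟩
            rw [← hzy]
            exact hz2
          · intro a ha b hb hab
            simp only [Finset.coe_filter, Set.mem_setOf_eq] at ha hb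
            exact Prod.ext hab (ha.2.trans hb.2.symm)
        calc ((T.filter fun z => z.2 = y3).card : ℝ)
            ≤ _ := Nat.cast_le.mpr hle
          _ ≤ (Fintype.card F : ℝ) ^ (d - 1) := Star13.bisector_card_le hodd hy3ne
      · have hle : (T.filter fun z => z.2 = y3).card ≤ 𝓔.card := by
          apply Finset.card_le_card_of_injOn (fun z => z.1)
          · intro z hz
            rw [Finset.mem_coe, Finset.mem_filter, hTdef, Finset.mem_filter, Finset.mem_product] at hz
            exact hz.1.1.1
          · intro a ha b hb hab
            simp only [Finset.coe_filter, Set.mem_setOf_eq] at ha hb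
            exact Prod.ext hab (ha.2.trans hb.2.symm)
        exact_mod_cast hle
    have hSphle : ((Sph).card : ℝ) ≤ M3 := by
      rw [hM3def]
      refine le_min ?_ ?_
      · have hle : Sph.card ≤ (Finset.univ.filter fun v : Fin d → F =>
            norm2 (y4 - v) = r * norm2 (x4 - X 1)).card := by
          apply Finset.card_le_card
          intro v hv
          rw [hSphdef, Finset.mem_filter] at hv
          rw [Finset.mem_filter]
          exact ⟨Finset.mem_univ _, hv.2.1⟩
        calc ((Sph).card : ℝ) ≤ _ := Nat.cast_le.mpr hle
          _ ≤ 3 / 2 * (Fintype.card F : ℝ) ^ (d - 1) := Star13.sphere_card_le hodd hd y4 hR0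
      · rw [hSphdef]
        exact_mod_cast Finset.card_le_card (Finset.filter_subset _ _)
    calc ((S.filter fun p => mainφ p = ((X, Y), (x2, x4, y4))).card : ℝ)
        ≤ (T.card : ℝ) := Nat.cast_le.mpr hfibT
      _ = ∑ y3 ∈ Sph, ((T.filter fun z => z.2 = y3).card : ℝ) := by
          rw [hTsum]; push_cast; rfl
      _ ≤ ∑ _y3 ∈ Sph, M2 := Finset.sum_le_sum hinner
      _ = (Sph.card : ℝ) * M2 := by rw [Finset.sum_const, nsmul_eq_mul]
      _ ≤ M3 * M2 := mul_le_mul_of_nonneg_right hSphle hM2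
      _ = M2 * M3 := mul_comm _ _
  calc (S.card : ℝ)
      = ∑ b ∈ (Pset 𝓔 1 r) ×ˢ (𝓔 ×ˢ 𝓔 ×ˢ 𝓔),
          ((S.filter fun p => mainφ p = b).card : ℝ) := by
        rw [hsum]; push_cast; rfl
    _ ≤ ∑ _b ∈ (Pset 𝓔 1 r) ×ˢ (𝓔 ×ˢ 𝓔 ×ˢ 𝓔), M2 * M3 := Finset.sum_le_sum hfib
    _ = (((Pset 𝓔 1 r) ×ˢ (𝓔 ×ˢ 𝓔 ×ˢ 𝓔)).card : ℝ) * (M2 * M3) := by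
        rw [Finset.sum_const, nsmul_eq_mul]
    _ = ((Pset 𝓔 1 r).card : ℝ) * ((𝓔.card : ℝ) * ((𝓔.card : ℝ) * (𝓔.card : ℝ)))
          * (M2 * M3) := by
        rw [Finset.card_product, Finset.card_product, Finset.card_product]
        push_cast
        ring
    _ = (𝓔.card : ℝ) ^ 3 * ((Pset 𝓔 1 r).card : ℝ) * M2 * M3 := by ring
end

section
/- Let q be an odd prime power, let d satisfy 2 ≤ d ≤ 4, let 𝓔 ⊆ F_q^d be a finite set, and let r ∈ F_q. Let C denote the set of tuples (x_1, ..., x_5, y_1, ..., y_5) ∈ P_4(r) such that x_1, ..., x_5 are pairwise distinct and y_1, ..., y_5 are pairwise distinct. Then |C| ≥ |P_4(r)| − 10·|𝓔|·|P_3(r)| − 3·|𝓔|^3·q^(2d−2)·|P_1(r)| − |𝓔|^2·|P_2(r)|. -/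
open scoped Classical

section AuxAnalytic

open Finset

variable {F : Type*} [Field F] [Fintype F]

set_option linter.unusedSectionVars false
set_option maxHeartbeats 1000000

lemma card_sqrtSet (u : F) : (Finset.univ.filter fun x : F => x^2 = u).card ≤ 2 := by
  rcases (Finset.univ.filter fun x : F => x^2 = u).eq_empty_or_nonempty with h | ⟨a, ha⟩
  · simp [h]
  · have ha' : a ^ 2 = u := (Finset.mem_filter.mp ha).2
    have hsub : (Finset.univ.filter fun x : F => x^2 = u) ⊆ {a, -a} := by
      intro b hb
      have hb' : b ^ 2 = a ^ 2 := by rw [(Finset.mem_filter.mp hb).2, ha']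
      have h0 : (b - a) * (b + a) = 0 := by linear_combination hb'
      rcases mul_eq_zero.mp h0 with h | h
      · simp [sub_eq_zero.mp h]
      · have : b = -a := by linear_combination h
        simp [this]
    have := Finset.card_le_card hsub
    have h2 : ({a, -a} : Finset F).card ≤ 2 :=
      (Finset.card_insert_le _ _).trans (by simp)
    omega

lemma card_quad (h2 : (2:F) ≠ 0) {α : F} (hα : α ≠ 0) (β γ : F) :
    (Finset.univ.filter fun x : F => α*x^2 + β*x + γ = 0).card ≤ 2 := by
  have hinj : Set.InjOn (fun x : F => 2*α*x + β)
      ↑(Finset.univ.filter fun x : F => α*x^2 + β*x + γ = 0) := by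
    intro x _ y _ h
    simp only at h
    have h2α : 2*α ≠ 0 := mul_ne_zero h2 hα
    have hxy : 2*α*x = 2*α*y := by linear_combination h
    exact mul_left_cancel₀ h2α hxy
  have hmaps : ∀ x ∈ (Finset.univ.filter fun x : F => α*x^2 + β*x + γ = 0),
      (2*α*x + β) ∈ (Finset.univ.filter fun y : F => y^2 = β^2 - 4*α*γ) := by
    intro x hx
    have hx' := (Finset.mem_filter.mp hx).2
    refine Finset.mem_filter.mpr ⟨Finset.mem_univ _, ?_⟩
    linear_combination 4*α*hx'
  calc _ ≤ (Finset.univ.filter fun y : F => y^2 = β^2 - 4*α*γ).card :=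
        Finset.card_le_card_of_injOn _ hmaps hinj
    _ ≤ 2 := card_sqrtSet _

lemma card_shift_sq (c u : F) : (Finset.univ.filter fun a : F => (a - c)^2 = u).card ≤ 2 := by
  have hmaps : ∀ a ∈ (Finset.univ.filter fun a : F => (a - c)^2 = u),
      a - c ∈ (Finset.univ.filter fun x : F => x^2 = u) :=
    fun a ha => Finset.mem_filter.mpr ⟨Finset.mem_univ _, (Finset.mem_filter.mp ha).2⟩
  have := Finset.card_le_card_of_injOn (fun a : F => a - c) hmaps
    (fun a _ b _ h => by simpa [sub_left_inj] using h)
  exact this.trans (card_sqrtSet u)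

lemma norm2_succ {n : ℕ} (w : Fin (n+1) → F) :
    norm2 w = w 0 ^ 2 + ∑ i : Fin n, w i.succ ^ 2 := by
  simp [norm2, Fin.sum_univ_succ]

lemma card_sphere (n : ℕ) (c : Fin (n+1) → F) (t : F) :
    ((Finset.univ : Finset (Fin (n+1) → F)).filter fun z => norm2 (z - c) = t).card
      ≤ 2 * Fintype.card F ^ n := by
  set s := (Finset.univ : Finset (Fin (n+1) → F)).filter fun z => norm2 (z - c) = t with hs
  have hmaps : ∀ z ∈ s, (fun i : Fin n => z i.succ) ∈ (Finset.univ : Finset (Fin n → F)) :=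
    fun z _ => Finset.mem_univ _
  rw [Finset.card_eq_sum_card_fiberwise hmaps]
  have hfib : ∀ w : Fin n → F,
      (s.filter fun z => (fun i : Fin n => z i.succ) = w).card ≤ 2 := by
    intro w
    have hinj : Set.InjOn (fun z : Fin (n+1) → F => z 0)
        ↑(s.filter fun z => (fun i : Fin n => z i.succ) = w) := by
      intro z hz z' hz' h
      have hw := (Finset.mem_filter.mp hz).2
      have hw' := (Finset.mem_filter.mp hz').2
      funext k
      rcases Fin.eq_zero_or_eq_succ k with rfl | ⟨j, rfl⟩
      · exact h
      · exact (congrFun hw j).trans (congrFun hw' j).symm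
    have hmaps2 : ∀ z ∈ s.filter fun z => (fun i : Fin n => z i.succ) = w,
        z 0 ∈ Finset.univ.filter fun a : F =>
          (a - c 0)^2 = t - ∑ i : Fin n, (w i - c i.succ)^2 := by
      intro z hz
      obtain ⟨hz1, hz2⟩ := Finset.mem_filter.mp hz
      have hn : norm2 (z - c) = t := (Finset.mem_filter.mp hz1).2
      refine Finset.mem_filter.mpr ⟨Finset.mem_univ _, ?_⟩
      rw [norm2_succ] at hn
      simp only [Pi.sub_apply] at hn
      have : ∀ i : Fin n, z i.succ = w i := fun i => congrFun hz2 i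
      simp only [this] at hn
      linear_combination hn
    have := Finset.card_le_card_of_injOn _ hmaps2 hinj
    exact this.trans (card_shift_sq _ _)
  calc ∑ w : Fin n → F, (s.filter fun z => (fun i : Fin n => z i.succ) = w).card
      ≤ ∑ _w : Fin n → F, 2 := Finset.sum_le_sum fun w _ => hfib w
    _ = 2 * Fintype.card F ^ n := by simp [Finset.card_univ, mul_comm]

lemma sum_univ_two_succ {n : ℕ} {M : Type*} [AddCommMonoid M] (f : Fin (n+2) → M) :
    ∑ i, f i = f 0 + f 1 + ∑ i : Fin n, f i.succ.succ := by
  rw [Fin.sum_univ_succ, Fin.sum_univ_succ, Fin.succ_zero_eq_one]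
  exact (add_assoc _ _ _).symm

lemma lin_quad (n : ℕ) (h2 : (2:F) ≠ 0) (v a : Fin (n+2) → F)
    (hv0 : v 0 ≠ 0) (hα : v 0^2 + v 1^2 ≠ 0) (s c : F) :
    ((Finset.univ : Finset (Fin (n+2) → F)).filter
        (fun z => norm2 (z - a) = s ∧ ∑ i, v i * z i = c)).card
      ≤ 2 * Fintype.card F ^ n := by
  set s0 := (Finset.univ : Finset (Fin (n+2) → F)).filter
      (fun z => norm2 (z - a) = s ∧ ∑ i, v i * z i = c) with hs0
  have hmaps : ∀ z ∈ s0, (fun i : Fin n => z i.succ.succ) ∈ (Finset.univ : Finset (Fin n → F)) :=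
    fun z _ => Finset.mem_univ _
  rw [Finset.card_eq_sum_card_fiberwise hmaps]
  have hfib : ∀ w : Fin n → F,
      (s0.filter fun z => (fun i : Fin n => z i.succ.succ) = w).card ≤ 2 := by
    intro w
    set K := ∑ i : Fin n, v i.succ.succ * w i with hK
    set R := ∑ i : Fin n, (w i - a i.succ.succ)^2 with hR
    set α := v 0^2 + v 1^2 with hαdef
    set β := -2*(v 1*(c - K - v 0 * a 0)) - 2*(v 0^2)*(a 1) with hβ
    set γ := (c - K - v 0 * a 0)^2 + v 0^2 * (a 1)^2 + v 0^2*(R - s) with hγ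
    have hdec : ∀ z ∈ s0.filter fun z => (fun i : Fin n => z i.succ.succ) = w,
        ((z 0 - a 0)^2 + (z 1 - a 1)^2 + R = s) ∧ (v 0 * z 0 + v 1 * z 1 + K = c) := by
      intro z hz
      obtain ⟨hz1, hz2⟩ := Finset.mem_filter.mp hz
      obtain ⟨hn, hl⟩ := (Finset.mem_filter.mp hz1).2
      have hw : ∀ i : Fin n, z i.succ.succ = w i := fun i => congrFun hz2 i
      constructor
      · have : norm2 (z - a) = (z 0 - a 0)^2 + (z 1 - a 1)^2
            + ∑ i : Fin n, (z i.succ.succ - a i.succ.succ)^2 := by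
          unfold norm2
          rw [sum_univ_two_succ]
          simp [Pi.sub_apply]
        rw [this] at hn
        simp only [hw] at hn
        linear_combination hn
      · rw [sum_univ_two_succ] at hl
        simp only [hw] at hl
        linear_combination hl
    have hinj : Set.InjOn (fun z : Fin (n+2) → F => z 1)
        ↑(s0.filter fun z => (fun i : Fin n => z i.succ.succ) = w) := by
      intro z hz z' hz' h
      simp only at h
      have h1 := (hdec z hz).2
      have h1' := (hdec z' hz').2
      have hz2 := (Finset.mem_filter.mp hz).2
      have hz2' := (Finset.mem_filter.mp hz').2
      have hz0 : z 0 = z' 0 := by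
        have : v 0 * z 0 = v 0 * z' 0 := by linear_combination h1 - h1' - v 1 * h
        exact mul_left_cancel₀ hv0 this
      funext k
      induction k using Fin.cases with
      | zero => exact hz0
      | succ j =>
        induction j using Fin.cases with
        | zero => simpa [Fin.succ_zero_eq_one] using h
        | succ m => exact (congrFun hz2 m).trans (congrFun hz2' m).symm
    have hmaps2 : ∀ z ∈ s0.filter fun z => (fun i : Fin n => z i.succ.succ) = w,
        z 1 ∈ Finset.univ.filter fun x : F => α*x^2 + β*x + γ = 0 := by
      intro z hz
      obtain ⟨hn, hl⟩ := hdec z hz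
      refine Finset.mem_filter.mpr ⟨Finset.mem_univ _, ?_⟩
      linear_combination (v 0^2) * hn -
        (c - K - v 1 * z 1 + v 0 * z 0 - 2 * v 0 * a 0) * hl
    have := Finset.card_le_card_of_injOn _ hmaps2 hinj
    exact this.trans (card_quad h2 hα β γ)
  calc ∑ w : Fin n → F, (s0.filter fun z => (fun i : Fin n => z i.succ.succ) = w).card
      ≤ ∑ _w : Fin n → F, 2 := Finset.sum_le_sum fun w _ => hfib w
    _ = 2 * Fintype.card F ^ n := by simp [Finset.card_univ, mul_comm]

lemma norm2_comp_perm {m : ℕ} (σ : Equiv.Perm (Fin m)) (w : Fin m → F) :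
    norm2 (w ∘ σ) = norm2 w := by
  unfold norm2
  exact Equiv.sum_comp σ (fun i => w i ^ 2)

lemma card_perm_transport {m : ℕ} (τ : Equiv.Perm (Fin m)) (v a : Fin m → F) (s c : F) :
    ((Finset.univ : Finset (Fin m → F)).filter
        (fun z => norm2 (z - a) = s ∧ ∑ i, v i * z i = c)).card
    = ((Finset.univ : Finset (Fin m → F)).filter
        (fun z => norm2 (z - (a ∘ τ)) = s ∧ ∑ i, (v ∘ τ) i * z i = c)).card := by
  apply Finset.card_bij' (fun z _ => z ∘ τ) (fun z _ => z ∘ τ.symm)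
  · intro z hz
    obtain ⟨-, h1, h2⟩ := Finset.mem_filter.mp hz
    refine Finset.mem_filter.mpr ⟨Finset.mem_univ _, ?_, ?_⟩
    · have : z ∘ τ - a ∘ τ = (z - a) ∘ τ := by funext i; simp
      rw [this, norm2_comp_perm, h1]
    · have : ∀ i, (v ∘ τ) i * (z ∘ τ) i = (fun j => v j * z j) (τ i) := fun i => rfl
      calc (∑ i, (v ∘ τ) i * (z ∘ τ) i) = ∑ i, (fun j => v j * z j) (τ i) := by simp [this]
        _ = ∑ i, v i * z i := by simpa using Equiv.sum_comp τ (fun j => v j * z j)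
        _ = c := h2
  · intro z hz
    obtain ⟨-, h1, h2⟩ := Finset.mem_filter.mp hz
    refine Finset.mem_filter.mpr ⟨Finset.mem_univ _, ?_, ?_⟩
    · have : z ∘ τ.symm - a = (z - a ∘ τ) ∘ τ.symm := by funext i; simp
      rw [this, norm2_comp_perm, h1]
    · have : ∀ i, v i * (z ∘ τ.symm) i = (fun j => (v ∘ τ) j * z j) (τ.symm i) := by
        intro i; simp
      calc (∑ i, v i * (z ∘ τ.symm) i) = ∑ i, (fun j => (v ∘ τ) j * z j) (τ.symm i) := by
            simp [this]
        _ = ∑ i, (v ∘ τ) i * z i := by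
            simpa using Equiv.sum_comp τ.symm (fun j => (v ∘ τ) j * z j)
        _ = c := h2
  · intro z _; funext i; simp
  · intro z _; funext i; simp

lemma degenerate_two (h2 : (2:F) ≠ 0) (v a : Fin 2 → F)
    (hv0 : v 0 ≠ 0) (hsum : v 0^2 + v 1^2 = 0) {s : F} (hs : s ≠ 0) (c : F) :
    ((Finset.univ : Finset (Fin 2 → F)).filter
        (fun z => norm2 (z - a) = s ∧ ∑ i, v i * z i = c)).card ≤ 1 := by
  have hv1 : v 1 ≠ 0 := by
    intro h
    apply hv0
    have : v 0 ^ 2 = 0 := by rw [h] at hsum; linear_combination hsum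
    exact pow_eq_zero_iff (n := 2) (by norm_num) |>.mp this
  set A := c - v 0 * a 0 + v 1 * a 1 with hA
  set B := c - v 0 * a 0 - v 1 * a 1 with hB
  have hmem : ∀ z ∈ (Finset.univ : Finset (Fin 2 → F)).filter
      (fun z => norm2 (z - a) = s ∧ ∑ i, v i * z i = c),
      ((z 0 - a 0)^2 + (z 1 - a 1)^2 = s) ∧ (v 0 * z 0 + v 1 * z 1 = c) := by
    intro z hz
    obtain ⟨-, hn, hl⟩ := Finset.mem_filter.mp hz
    constructor
    · rw [show norm2 (z - a) = (z 0 - a 0)^2 + (z 1 - a 1)^2 by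
        unfold norm2; rw [Fin.sum_univ_two]; simp] at hn
      exact hn
    · rw [Fin.sum_univ_two] at hl; exact hl
  have key : ∀ z ∈ (Finset.univ : Finset (Fin 2 → F)).filter
      (fun z => norm2 (z - a) = s ∧ ∑ i, v i * z i = c),
      (A - 2 * v 1 * z 1) * B = v 0^2 * s := by
    intro z hz
    obtain ⟨hn, hl⟩ := hmem z hz
    linear_combination (v 0^2) * hn - (2*v 0*(z 0 - a 0) - (v 0 * z 0 + v 1 * z 1 - c))*hl
      - (z 1 - a 1)^2 * hsum
  apply Finset.card_le_one.mpr
  intro z hz z' hz'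
  have k1 := key z hz
  have k1' := key z' hz'
  have hBne : B ≠ 0 := by
    intro h
    rw [h, mul_zero] at k1
    exact (mul_ne_zero (pow_ne_zero 2 hv0) hs) k1.symm
  have hz1 : z 1 = z' 1 := by
    have h3 : (2 * v 1 * B) * z 1 = (2 * v 1 * B) * z' 1 := by
      linear_combination k1' - k1
    exact mul_left_cancel₀ (by exact mul_ne_zero (mul_ne_zero h2 hv1) hBne) h3
  have hz0 : z 0 = z' 0 := by
    have l := (hmem z hz).2
    have l' := (hmem z' hz').2
    have : v 0 * z 0 = v 0 * z' 0 := by linear_combination l - l' - v 1 * hz1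
    exact mul_left_cancel₀ hv0 this
  funext k
  fin_cases k
  · exact hz0
  · exact hz1

lemma sphere_hyperplane (n : ℕ) (h2 : (2:F) ≠ 0) {v : Fin (n+2) → F} (a : Fin (n+2) → F)
    (hv : v ≠ 0) {s : F} (hs : s ≠ 0) (c : F) :
    ((Finset.univ : Finset (Fin (n+2) → F)).filter
        (fun z => norm2 (z - a) = s ∧ ∑ i, v i * z i = c)).card
      ≤ 2 * Fintype.card F ^ n := by
  have h01 : (0 : Fin (n+2)) ≠ 1 := by
    intro h
    have := congrArg Fin.val h
    simp at this
  by_cases hgood : ∃ i k : Fin (n+2), i ≠ k ∧ v i ≠ 0 ∧ v i^2 + v k^2 ≠ 0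
  · obtain ⟨i, k, hik, hvi, hik2⟩ := hgood
    set τ1 := Equiv.swap (0 : Fin (n+2)) i with hτ1
    set j := τ1.symm k with hjdef
    have hτ1j : τ1 j = k := Equiv.apply_symm_apply τ1 k
    have hj0 : j ≠ 0 := by
      intro h
      rw [h] at hτ1j
      have : τ1 0 = i := Equiv.swap_apply_left 0 i
      rw [this] at hτ1j
      exact hik hτ1j
    set τ := τ1 * (Equiv.swap (1 : Fin (n+2)) j) with hτ
    have hτ0 : τ 0 = i := by
      have h1 : Equiv.swap (1 : Fin (n+2)) j 0 = 0 :=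
        Equiv.swap_apply_of_ne_of_ne h01 (Ne.symm hj0)
      show τ1 (Equiv.swap (1 : Fin (n+2)) j 0) = i
      rw [h1]
      exact Equiv.swap_apply_left 0 i
    have hτ1' : τ 1 = k := by
      show τ1 (Equiv.swap (1 : Fin (n+2)) j 1) = k
      rw [Equiv.swap_apply_left]
      exact hτ1j
    rw [card_perm_transport τ v a s c]
    apply lin_quad n h2 (v ∘ τ) (a ∘ τ)
    · show v (τ 0) ≠ 0
      rw [hτ0]; exact hvi
    · show v (τ 0)^2 + v (τ 1)^2 ≠ 0
      rw [hτ0, hτ1']; exact hik2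
  · push_neg at hgood
    have hvex : ∃ i, v i ≠ 0 := Function.ne_iff.mp hv
    obtain ⟨i0, hi0⟩ := hvex
    match n with
    | 0 =>
      have hv0 : v 0 ≠ 0 := by
        by_cases h00 : v 0 = 0
        · exfalso
          have hi01 : i0 = 1 := by
            fin_cases i0
            · exact absurd h00 (by simpa using hi0)
            · rfl
          rw [hi01] at hi0
          have := hgood 1 0 (Ne.symm h01) hi0
          rw [h00] at this
          apply hi0
          have : v 1 ^ 2 = 0 := by linear_combination this
          exact pow_eq_zero_iff (by norm_num) |>.mp this
        · exact h00
      have hsum : v 0^2 + v 1^2 = 0 := by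
        by_cases h11 : v 1 = 0
        · exfalso
          have := hgood 0 1 h01 hv0
          rw [h11] at this
          apply hv0
          have h20 : v 0 ^ 2 = 0 := by linear_combination this
          exact pow_eq_zero_iff (by norm_num) |>.mp h20
        · exact hgood 0 1 h01 hv0
      calc _ ≤ 1 := degenerate_two h2 v a hv0 hsum hs c
        _ ≤ 2 * Fintype.card F ^ 0 := by norm_num
    | Nat.succ m =>
      exfalso
      have hcard : 1 < (Finset.univ.erase i0).card := by
        have : (Finset.univ.erase i0).card = (m + 3) - 1 := by
          rw [Finset.card_erase_of_mem (Finset.mem_univ _)]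
          simp [Fintype.card_fin]
        omega
      obtain ⟨k, hk, j, hj, hkj⟩ := Finset.one_lt_card.mp hcard
      have hki0 : k ≠ i0 := Finset.ne_of_mem_erase hk
      have hji0 : j ≠ i0 := Finset.ne_of_mem_erase hj
      have hk2 : v i0^2 + v k^2 = 0 := hgood i0 k (Ne.symm hki0) hi0
      have hj2 : v i0^2 + v j^2 = 0 := hgood i0 j (Ne.symm hji0) hi0
      have hvk : v k ≠ 0 := by
        intro h
        rw [h] at hk2
        apply hi0
        have : v i0 ^ 2 = 0 := by linear_combination hk2
        exact pow_eq_zero_iff (by norm_num) |>.mp this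
      have hkj2 := hgood k j hkj hvk
      have : (2 : F) * v i0 ^ 2 = 0 := by linear_combination hk2 + hj2 - hkj2
      rcases mul_eq_zero.mp this with h | h
      · exact h2 h
      · exact hi0 (pow_eq_zero_iff (by norm_num) |>.mp h)

lemma card_two_spheres (n : ℕ) (h2 : (2:F) ≠ 0) {a b : Fin (n+2) → F} (hab : a ≠ b)
    {s : F} (hs : s ≠ 0) (t : F) :
    ((Finset.univ : Finset (Fin (n+2) → F)).filter
        (fun z => norm2 (z - a) = s ∧ norm2 (z - b) = t)).card
      ≤ 2 * Fintype.card F ^ n := by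
  set v : Fin (n+2) → F := fun i => 2*(b i - a i) with hv
  set c : F := s - t + norm2 b - norm2 a with hc
  have hvne : v ≠ 0 := by
    obtain ⟨i, hi⟩ := Function.ne_iff.mp hab
    apply Function.ne_iff.mpr
    exact ⟨i, by simp [hv]; constructor; exact h2; exact sub_ne_zero.mpr (Ne.symm hi)⟩
  have hsub : ((Finset.univ : Finset (Fin (n+2) → F)).filter
        (fun z => norm2 (z - a) = s ∧ norm2 (z - b) = t))
      ⊆ ((Finset.univ : Finset (Fin (n+2) → F)).filter
        (fun z => norm2 (z - a) = s ∧ ∑ i, v i * z i = c)) := by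
    intro z hz
    obtain ⟨-, hn1, hn2⟩ := Finset.mem_filter.mp hz
    refine Finset.mem_filter.mpr ⟨Finset.mem_univ _, hn1, ?_⟩
    have e1 : norm2 (z - a) = ∑ i, (z i - a i)^2 := by unfold norm2; simp
    have e2 : norm2 (z - b) = ∑ i, (z i - b i)^2 := by unfold norm2; simp
    have key : ∀ i, v i * z i = ((z i - a i)^2 + b i ^2) - ((z i - b i)^2 + a i ^2) := by
      intro i; simp only [hv]; ring
    calc (∑ i, v i * z i)
        = ∑ i, (((z i - a i)^2 + b i ^2) - ((z i - b i)^2 + a i ^2)) :=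
          Finset.sum_congr rfl fun i _ => key i
      _ = (∑ i, ((z i - a i)^2 + b i ^2)) - ∑ i, ((z i - b i)^2 + a i ^2) :=
          Finset.sum_sub_distrib _ _
      _ = ((∑ i, (z i - a i)^2) + ∑ i, b i ^2) - ((∑ i, (z i - b i)^2) + ∑ i, a i ^2) := by
          rw [Finset.sum_add_distrib, Finset.sum_add_distrib]
      _ = c := by
          rw [← e1, ← e2, hn1, hn2, hc]
          unfold norm2
          ring
  exact (Finset.card_le_card hsub).trans (sphere_hyperplane n h2 a hvne hs c)

lemma norm2_sub_comm {d : ℕ} (x y : Fin d → F) : norm2 (x - y) = norm2 (y - x) := by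
  unfold norm2
  exact Finset.sum_congr rfl fun i _ => by simp [Pi.sub_apply]; ring

end AuxAnalytic

lemma pair_classify {β : Type*} (f : Fin 5 → β)
    (h01 : f 0 ≠ f 1) (h12 : f 1 ≠ f 2) (h23 : f 2 ≠ f 3) (h34 : f 3 ≠ f 4)
    (hninj : ¬ Function.Injective f) :
    f 0 = f 2 ∨ f 0 = f 3 ∨ f 0 = f 4 ∨ f 1 = f 4 ∨ f 2 = f 4 ∨ f 1 = f 3 := by
  rw [Function.Injective] at hninj
  push_neg at hninj
  obtain ⟨i, j, heq, hij⟩ := hninj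
  have h10 : f 1 ≠ f 0 := fun h => h01 h.symm
  have h21 : f 2 ≠ f 1 := fun h => h12 h.symm
  have h32 : f 3 ≠ f 2 := fun h => h23 h.symm
  have h43 : f 4 ≠ f 3 := fun h => h34 h.symm
  fin_cases i <;> fin_cases j <;>
    first
      | exact absurd rfl hij
      | exact absurd heq h01
      | exact absurd heq h12
      | exact absurd heq h23
      | exact absurd heq h34
      | exact absurd heq h10
      | exact absurd heq h21
      | exact absurd heq h32
      | exact absurd heq h43
      | exact Or.inl heq
      | exact Or.inl heq.symm
      | exact Or.inr (Or.inl heq)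
      | exact Or.inr (Or.inl heq.symm)
      | exact Or.inr (Or.inr (Or.inl heq))
      | exact Or.inr (Or.inr (Or.inl heq.symm))
      | exact Or.inr (Or.inr (Or.inr (Or.inl heq)))
      | exact Or.inr (Or.inr (Or.inr (Or.inl heq.symm)))
      | exact Or.inr (Or.inr (Or.inr (Or.inr (Or.inl heq))))
      | exact Or.inr (Or.inr (Or.inr (Or.inr (Or.inl heq.symm))))
      | exact Or.inr (Or.inr (Or.inr (Or.inr (Or.inr heq))))
      | exact Or.inr (Or.inr (Or.inr (Or.inr (Or.inr heq.symm))))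

section AuxCombinatorial

open Finset

variable {F : Type*} [Field F] [Fintype F] {d : ℕ}

set_option linter.unusedSectionVars false
set_option maxHeartbeats 1000000

lemma mem_Pset {𝓔 : Finset (Fin d → F)} {k : ℕ} {r : F}
    {p : (Fin (k+1) → Fin d → F) × (Fin (k+1) → Fin d → F)} :
    p ∈ Pset 𝓔 k r ↔
      (∀ i, p.1 i ∈ 𝓔) ∧ (∀ i, p.2 i ∈ 𝓔) ∧
      ∀ i : Fin k,
        norm2 (p.2 i.succ - p.2 i.castSucc) = r * norm2 (p.1 i.succ - p.1 i.castSucc) ∧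
        r * norm2 (p.1 i.succ - p.1 i.castSucc) ≠ 0 := by
  simp [Pset]

lemma endpoint_first_x (𝓔 : Finset (Fin d → F)) (r : F) (j : Fin 5) (hj : 2 ≤ (j : ℕ)) :
    ((Pset 𝓔 4 r).filter fun p => p.1 0 = p.1 j).card
      ≤ 𝓔.card * (Pset 𝓔 3 r).card := by
  classical
  have hmaps : ∀ p ∈ (Pset 𝓔 4 r).filter fun p => p.1 0 = p.1 j,
      (p.2 0, ((fun i : Fin 4 => p.1 i.succ), (fun i : Fin 4 => p.2 i.succ)))
        ∈ 𝓔 ×ˢ Pset 𝓔 3 r := by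
    intro p hp
    obtain ⟨hp1, -⟩ := Finset.mem_filter.mp hp
    obtain ⟨hE1, hE2, hcond⟩ := mem_Pset.mp hp1
    refine Finset.mem_product.mpr ⟨hE2 0, mem_Pset.mpr ⟨fun i => hE1 _, fun i => hE2 _, ?_⟩⟩
    intro i
    have := hcond i.succ
    simpa using this
  have hinj : Set.InjOn
      (fun p : (Fin 5 → Fin d → F) × (Fin 5 → Fin d → F) =>
        (p.2 0, ((fun i : Fin 4 => p.1 i.succ), (fun i : Fin 4 => p.2 i.succ))))
      ↑((Pset 𝓔 4 r).filter fun p => p.1 0 = p.1 j) := by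
    intro p hp p' hp' h
    obtain ⟨-, heq⟩ := Finset.mem_filter.mp hp
    obtain ⟨-, heq'⟩ := Finset.mem_filter.mp hp'
    simp only [Prod.mk.injEq] at h
    obtain ⟨h0, h1, h2⟩ := h
    obtain ⟨jm, rfl⟩ := Fin.eq_succ_of_ne_zero (Fin.ne_of_val_ne (by omega) : j ≠ 0)
    have hx : p.1 = p'.1 := by
      funext k
      induction k using Fin.cases with
      | zero =>
        rw [heq, heq']
        exact (congrFun h1 jm : _)
      | succ m => exact (congrFun h1 m : _)
    have hy : p.2 = p'.2 := by
      funext k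
      induction k using Fin.cases with
      | zero => exact h0
      | succ m => exact (congrFun h2 m : _)
    exact Prod.ext hx hy
  have := Finset.card_le_card_of_injOn _ hmaps hinj
  simpa [Finset.card_product] using this

lemma endpoint_first_y (𝓔 : Finset (Fin d → F)) (r : F) (j : Fin 5) (hj : 2 ≤ (j : ℕ)) :
    ((Pset 𝓔 4 r).filter fun p => p.2 0 = p.2 j).card
      ≤ 𝓔.card * (Pset 𝓔 3 r).card := by
  classical
  have hmaps : ∀ p ∈ (Pset 𝓔 4 r).filter fun p => p.2 0 = p.2 j,
      (p.1 0, ((fun i : Fin 4 => p.1 i.succ), (fun i : Fin 4 => p.2 i.succ)))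
        ∈ 𝓔 ×ˢ Pset 𝓔 3 r := by
    intro p hp
    obtain ⟨hp1, -⟩ := Finset.mem_filter.mp hp
    obtain ⟨hE1, hE2, hcond⟩ := mem_Pset.mp hp1
    refine Finset.mem_product.mpr ⟨hE1 0, mem_Pset.mpr ⟨fun i => hE1 _, fun i => hE2 _, ?_⟩⟩
    intro i
    have := hcond i.succ
    simpa using this
  have hinj : Set.InjOn
      (fun p : (Fin 5 → Fin d → F) × (Fin 5 → Fin d → F) =>
        (p.1 0, ((fun i : Fin 4 => p.1 i.succ), (fun i : Fin 4 => p.2 i.succ))))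
      ↑((Pset 𝓔 4 r).filter fun p => p.2 0 = p.2 j) := by
    intro p hp p' hp' h
    obtain ⟨-, heq⟩ := Finset.mem_filter.mp hp
    obtain ⟨-, heq'⟩ := Finset.mem_filter.mp hp'
    simp only [Prod.mk.injEq] at h
    obtain ⟨h0, h1, h2⟩ := h
    obtain ⟨jm, rfl⟩ := Fin.eq_succ_of_ne_zero (Fin.ne_of_val_ne (by omega) : j ≠ 0)
    have hy : p.2 = p'.2 := by
      funext k
      induction k using Fin.cases with
      | zero =>
        rw [heq, heq']
        exact (congrFun h2 jm : _)
      | succ m => exact (congrFun h2 m : _)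
    have hx : p.1 = p'.1 := by
      funext k
      induction k using Fin.cases with
      | zero => exact h0
      | succ m => exact (congrFun h1 m : _)
    exact Prod.ext hx hy
  have := Finset.card_le_card_of_injOn _ hmaps hinj
  simpa [Finset.card_product] using this

lemma endpoint_last_x (𝓔 : Finset (Fin d → F)) (r : F) (j : Fin 5) (hj : (j : ℕ) ≤ 2) :
    ((Pset 𝓔 4 r).filter fun p => p.1 j = p.1 4).card
      ≤ 𝓔.card * (Pset 𝓔 3 r).card := by
  classical
  have hmaps : ∀ p ∈ (Pset 𝓔 4 r).filter fun p => p.1 j = p.1 4,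
      (p.2 4, ((fun i : Fin 4 => p.1 i.castSucc), (fun i : Fin 4 => p.2 i.castSucc)))
        ∈ 𝓔 ×ˢ Pset 𝓔 3 r := by
    intro p hp
    obtain ⟨hp1, -⟩ := Finset.mem_filter.mp hp
    obtain ⟨hE1, hE2, hcond⟩ := mem_Pset.mp hp1
    refine Finset.mem_product.mpr ⟨hE2 4, mem_Pset.mpr ⟨fun i => hE1 _, fun i => hE2 _, ?_⟩⟩
    intro i
    have := hcond i.castSucc
    simpa using this
  have hinj : Set.InjOn
      (fun p : (Fin 5 → Fin d → F) × (Fin 5 → Fin d → F) =>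
        (p.2 4, ((fun i : Fin 4 => p.1 i.castSucc), (fun i : Fin 4 => p.2 i.castSucc))))
      ↑((Pset 𝓔 4 r).filter fun p => p.1 j = p.1 4) := by
    intro p hp p' hp' h
    obtain ⟨-, heq⟩ := Finset.mem_filter.mp hp
    obtain ⟨-, heq'⟩ := Finset.mem_filter.mp hp'
    simp only [Prod.mk.injEq] at h
    obtain ⟨h0, h1, h2⟩ := h
    have hj4 : j ≠ Fin.last 4 := Fin.ne_of_val_ne (by simp [Fin.val_last]; omega)
    obtain ⟨jm, rfl⟩ := Fin.exists_castSucc_eq.mpr hj4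
    have h4 : (4 : Fin 5) = Fin.last 4 := by decide
    have hx : p.1 = p'.1 := by
      funext k
      induction k using Fin.lastCases with
      | last =>
        rw [← h4, ← heq, ← heq']
        exact (congrFun h1 jm : _)
      | cast m => exact (congrFun h1 m : _)
    have hy : p.2 = p'.2 := by
      funext k
      induction k using Fin.lastCases with
      | last => rw [← h4]; exact h0
      | cast m => exact (congrFun h2 m : _)
    exact Prod.ext hx hy
  have := Finset.card_le_card_of_injOn _ hmaps hinj
  simpa [Finset.card_product] using this

lemma endpoint_last_y (𝓔 : Finset (Fin d → F)) (r : F) (j : Fin 5) (hj : (j : ℕ) ≤ 2) :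
    ((Pset 𝓔 4 r).filter fun p => p.2 j = p.2 4).card
      ≤ 𝓔.card * (Pset 𝓔 3 r).card := by
  classical
  have hmaps : ∀ p ∈ (Pset 𝓔 4 r).filter fun p => p.2 j = p.2 4,
      (p.1 4, ((fun i : Fin 4 => p.1 i.castSucc), (fun i : Fin 4 => p.2 i.castSucc)))
        ∈ 𝓔 ×ˢ Pset 𝓔 3 r := by
    intro p hp
    obtain ⟨hp1, -⟩ := Finset.mem_filter.mp hp
    obtain ⟨hE1, hE2, hcond⟩ := mem_Pset.mp hp1
    refine Finset.mem_product.mpr ⟨hE1 4, mem_Pset.mpr ⟨fun i => hE1 _, fun i => hE2 _, ?_⟩⟩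
    intro i
    have := hcond i.castSucc
    simpa using this
  have hinj : Set.InjOn
      (fun p : (Fin 5 → Fin d → F) × (Fin 5 → Fin d → F) =>
        (p.1 4, ((fun i : Fin 4 => p.1 i.castSucc), (fun i : Fin 4 => p.2 i.castSucc))))
      ↑((Pset 𝓔 4 r).filter fun p => p.2 j = p.2 4) := by
    intro p hp p' hp' h
    obtain ⟨-, heq⟩ := Finset.mem_filter.mp hp
    obtain ⟨-, heq'⟩ := Finset.mem_filter.mp hp'
    simp only [Prod.mk.injEq] at h
    obtain ⟨h0, h1, h2⟩ := h
    have hj4 : j ≠ Fin.last 4 := Fin.ne_of_val_ne (by simp [Fin.val_last]; omega)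
    obtain ⟨jm, rfl⟩ := Fin.exists_castSucc_eq.mpr hj4
    have h4 : (4 : Fin 5) = Fin.last 4 := by decide
    have hy : p.2 = p'.2 := by
      funext k
      induction k using Fin.lastCases with
      | last =>
        rw [← h4, ← heq, ← heq']
        exact (congrFun h2 jm : _)
      | cast m => exact (congrFun h2 m : _)
    have hx : p.1 = p'.1 := by
      funext k
      induction k using Fin.lastCases with
      | last => rw [← h4]; exact h0
      | cast m => exact (congrFun h1 m : _)
    exact Prod.ext hx hy
  have := Finset.card_le_card_of_injOn _ hmaps hinj
  simpa [Finset.card_product] using this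

section Middle
variable {n : ℕ} (𝓔 : Finset (Fin (n+2) → F)) (r : F)

-- the base map used for both middle classes
private noncomputable def bmap (p : (Fin 5 → Fin (n+2) → F) × (Fin 5 → Fin (n+2) → F)) :
    ((Fin 2 → Fin (n+2) → F) × (Fin 2 → Fin (n+2) → F)) ×
      ((Fin (n+2) → F) × (Fin (n+2) → F) × (Fin (n+2) → F)) :=
  (((fun i : Fin 2 => p.1 (i.succ.castSucc.castSucc)),
    (fun i : Fin 2 => p.2 (i.succ.castSucc.castSucc))),
   (p.1 0, p.1 4, p.2 4))

lemma bmap_mem {p} (hp : p ∈ Pset 𝓔 4 r) :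
    bmap p ∈ (Pset 𝓔 1 r) ×ˢ (𝓔 ×ˢ 𝓔 ×ˢ 𝓔) := by
  obtain ⟨hE1, hE2, hcond⟩ := mem_Pset.mp hp
  refine Finset.mem_product.mpr ⟨mem_Pset.mpr ⟨fun i => hE1 _, fun i => hE2 _, ?_⟩, ?_⟩
  · intro i
    fin_cases i
    have := hcond 1
    have ea : ((0 : Fin 1).succ.succ.castSucc.castSucc : Fin 5) = 2 := by decide
    have eb : ((0 : Fin 1).castSucc.succ.castSucc.castSucc : Fin 5) = 1 := by decide
    have ec : ((1 : Fin 4).succ : Fin 5) = 2 := by decide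
    have ed : ((1 : Fin 4).castSucc : Fin 5) = 1 := by decide
    rw [ec, ed] at this
    simpa [bmap, ea, eb] using this
  · exact Finset.mem_product.mpr ⟨hE1 0, Finset.mem_product.mpr ⟨hE1 4, hE2 4⟩⟩

lemma bmap_eq_elim {p p' : (Fin 5 → Fin (n+2) → F) × (Fin 5 → Fin (n+2) → F)}
    (h : bmap p = bmap p') :
    p.1 0 = p'.1 0 ∧ p.1 1 = p'.1 1 ∧ p.1 2 = p'.1 2 ∧ p.1 4 = p'.1 4 ∧
      p.2 1 = p'.2 1 ∧ p.2 2 = p'.2 2 ∧ p.2 4 = p'.2 4 := by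
  simp only [bmap, Prod.mk.injEq] at h
  obtain ⟨⟨hu, hw⟩, h0, h4, hf4⟩ := h
  have e1 : ((0 : Fin 2).succ.castSucc.castSucc : Fin 5) = 1 := by decide
  have e2 : ((1 : Fin 2).succ.castSucc.castSucc : Fin 5) = 2 := by decide
  have hu0 := congrFun hu 0
  have hu1 := congrFun hu 1
  have hw0 := congrFun hw 0
  have hw1 := congrFun hw 1
  beta_reduce at hu0 hu1 hw0 hw1
  rw [e1] at hu0 hw0
  rw [e2] at hu1 hw1
  exact ⟨h0, hu0, hu1, h4, hw0, hw1, hf4⟩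

lemma middle_x (h2 : (2:F) ≠ 0) :
    ((Pset 𝓔 4 r).filter fun p => p.1 1 = p.1 3 ∧ p.2 2 ≠ p.2 4).card
      ≤ ((Pset 𝓔 1 r).card * (𝓔.card * (𝓔.card * 𝓔.card)))
          * ((2 * Fintype.card F ^ (n+1)) * (2 * Fintype.card F ^ n)) := by
  classical
  set Mx := (Pset 𝓔 4 r).filter fun p => p.1 1 = p.1 3 ∧ p.2 2 ≠ p.2 4 with hMx
  have hbase : ∀ p ∈ Mx, bmap p ∈ (Pset 𝓔 1 r) ×ˢ (𝓔 ×ˢ 𝓔 ×ˢ 𝓔) :=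
    fun p hp => bmap_mem 𝓔 r (Finset.mem_filter.mp hp).1
  rw [Finset.card_eq_sum_card_fiberwise hbase]
  have hfib : ∀ b ∈ (Pset 𝓔 1 r) ×ˢ (𝓔 ×ˢ 𝓔 ×ˢ 𝓔),
      (Mx.filter fun p => bmap p = b).card
        ≤ (2 * Fintype.card F ^ (n+1)) * (2 * Fintype.card F ^ n) := by
    intro b _
    rcases (Mx.filter fun p => bmap p = b).eq_empty_or_nonempty with he | ⟨p₀, hp₀⟩
    · rw [he]; simp
    · obtain ⟨hp₀M, hp₀b⟩ := Finset.mem_filter.mp hp₀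
      subst hp₀b
      obtain ⟨hp₀P, hx13₀, hy24₀⟩ := Finset.mem_filter.mp hp₀M
      obtain ⟨hE1₀, hE2₀, hcond₀⟩ := mem_Pset.mp hp₀P
      set S1 := (Finset.univ : Finset (Fin (n+2) → F)).filter
        (fun z => norm2 (z - p₀.2 1) = r * norm2 (p₀.1 1 - p₀.1 0)) with hS1
      set S2 := (Finset.univ : Finset (Fin (n+2) → F)).filter
        (fun z => norm2 (z - p₀.2 2) = r * norm2 (p₀.1 1 - p₀.1 2)
          ∧ norm2 (z - p₀.2 4) = r * norm2 (p₀.1 4 - p₀.1 1)) with hS2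
      -- index facts
      have i0s : ((0 : Fin 4).succ : Fin 5) = 1 := by decide
      have i0c : ((0 : Fin 4).castSucc : Fin 5) = 0 := by decide
      have i2s : ((2 : Fin 4).succ : Fin 5) = 3 := by decide
      have i2c : ((2 : Fin 4).castSucc : Fin 5) = 2 := by decide
      have i3s : ((3 : Fin 4).succ : Fin 5) = 4 := by decide
      have i3c : ((3 : Fin 4).castSucc : Fin 5) = 3 := by decide
      have hmaps2 : ∀ p ∈ Mx.filter fun p => bmap p = bmap p₀,
          (p.2 0, p.2 3) ∈ S1 ×ˢ S2 := by
        intro p hp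
        obtain ⟨hpM, hpb⟩ := Finset.mem_filter.mp hp
        obtain ⟨hx0, hx1, hx2, hx4, hy1, hy2, hy4⟩ := bmap_eq_elim hpb
        obtain ⟨hpP, hx13, -⟩ := Finset.mem_filter.mp hpM
        obtain ⟨-, -, hcond⟩ := mem_Pset.mp hpP
        have c0 := (hcond 0).1
        have c2 := (hcond 2).1
        have c3 := (hcond 3).1
        rw [i0s, i0c] at c0
        rw [i2s, i2c] at c2
        rw [i3s, i3c] at c3
        refine Finset.mem_product.mpr ⟨Finset.mem_filter.mpr ⟨Finset.mem_univ _, ?_⟩,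
          Finset.mem_filter.mpr ⟨Finset.mem_univ _, ?_, ?_⟩⟩
        · rw [norm2_sub_comm, ← hy1, ← hx1, ← hx0]
          exact c0
        · rw [← hy2, ← hx1, hx13, ← hx2]
          exact c2
        · rw [norm2_sub_comm, ← hy4, ← hx4, ← hx1, hx13]
          exact c3
      have hinj2 : Set.InjOn (fun p : (Fin 5 → Fin (n+2) → F) × (Fin 5 → Fin (n+2) → F) =>
          (p.2 0, p.2 3)) ↑(Mx.filter fun p => bmap p = bmap p₀) := by
        intro p hp p' hp' hg
        simp only [Prod.mk.injEq] at hg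
        obtain ⟨hg0, hg3⟩ := hg
        obtain ⟨hpM, hpb⟩ := Finset.mem_filter.mp (by exact_mod_cast hp)
        obtain ⟨hpM', hpb'⟩ := Finset.mem_filter.mp (by exact_mod_cast hp')
        have hb := hpb.trans hpb'.symm
        obtain ⟨hx0, hx1, hx2, hx4, hy1, hy2, hy4⟩ := bmap_eq_elim hb
        have hx13 := (Finset.mem_filter.mp hpM).2.1
        have hx13' := (Finset.mem_filter.mp hpM').2.1
        refine Prod.ext (funext fun k => ?_) (funext fun k => ?_)
        · fin_cases k
          · exact hx0
          · exact hx1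
          · exact hx2
          · show p.1 3 = p'.1 3
            rw [← hx13, ← hx13']; exact hx1
          · exact hx4
        · fin_cases k
          · exact hg0
          · exact hy1
          · exact hy2
          · exact hg3
          · exact hy4
      have hcards : (Mx.filter fun p => bmap p = bmap p₀).card ≤ (S1 ×ˢ S2).card :=
        Finset.card_le_card_of_injOn _ hmaps2 hinj2
      have hS1card : S1.card ≤ 2 * Fintype.card F ^ (n+1) := card_sphere (n+1) _ _
      have hS2card : S2.card ≤ 2 * Fintype.card F ^ n := by
        apply card_two_spheres n h2 hy24₀
        have c2₀ := (hcond₀ 2).2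
        rw [i2s, i2c, ← hx13₀] at c2₀
        exact c2₀
      calc (Mx.filter fun p => bmap p = bmap p₀).card
          ≤ (S1 ×ˢ S2).card := hcards
        _ = S1.card * S2.card := Finset.card_product _ _
        _ ≤ (2 * Fintype.card F ^ (n+1)) * (2 * Fintype.card F ^ n) :=
            Nat.mul_le_mul hS1card hS2card
  calc (∑ b ∈ (Pset 𝓔 1 r) ×ˢ (𝓔 ×ˢ 𝓔 ×ˢ 𝓔), (Mx.filter fun p => bmap p = b).card)
      ≤ ∑ _b ∈ (Pset 𝓔 1 r) ×ˢ (𝓔 ×ˢ 𝓔 ×ˢ 𝓔),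
          (2 * Fintype.card F ^ (n+1)) * (2 * Fintype.card F ^ n) :=
        Finset.sum_le_sum hfib
    _ = ((Pset 𝓔 1 r).card * (𝓔.card * (𝓔.card * 𝓔.card)))
          * ((2 * Fintype.card F ^ (n+1)) * (2 * Fintype.card F ^ n)) := by
        simp [Finset.sum_const, Finset.card_product]

lemma middle_y (h2 : (2:F) ≠ 0) :
    ((Pset 𝓔 4 r).filter fun p => p.2 1 = p.2 3 ∧ p.1 2 ≠ p.1 4).card
      ≤ ((Pset 𝓔 1 r).card * (𝓔.card * (𝓔.card * 𝓔.card)))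
          * ((2 * Fintype.card F ^ (n+1)) * (2 * Fintype.card F ^ n)) := by
  classical
  set My := (Pset 𝓔 4 r).filter fun p => p.2 1 = p.2 3 ∧ p.1 2 ≠ p.1 4 with hMy
  have hbase : ∀ p ∈ My, bmap p ∈ (Pset 𝓔 1 r) ×ˢ (𝓔 ×ˢ 𝓔 ×ˢ 𝓔) :=
    fun p hp => bmap_mem 𝓔 r (Finset.mem_filter.mp hp).1
  rw [Finset.card_eq_sum_card_fiberwise hbase]
  have hfib : ∀ b ∈ (Pset 𝓔 1 r) ×ˢ (𝓔 ×ˢ 𝓔 ×ˢ 𝓔),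
      (My.filter fun p => bmap p = b).card
        ≤ (2 * Fintype.card F ^ (n+1)) * (2 * Fintype.card F ^ n) := by
    intro b _
    rcases (My.filter fun p => bmap p = b).eq_empty_or_nonempty with he | ⟨p₀, hp₀⟩
    · rw [he]; simp
    · obtain ⟨hp₀M, hp₀b⟩ := Finset.mem_filter.mp hp₀
      subst hp₀b
      obtain ⟨hp₀P, hy13₀, hx24₀⟩ := Finset.mem_filter.mp hp₀M
      obtain ⟨hE1₀, hE2₀, hcond₀⟩ := mem_Pset.mp hp₀P
      -- index facts
      have i0s : ((0 : Fin 4).succ : Fin 5) = 1 := by decide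
      have i0c : ((0 : Fin 4).castSucc : Fin 5) = 0 := by decide
      have i1s : ((1 : Fin 4).succ : Fin 5) = 2 := by decide
      have i1c : ((1 : Fin 4).castSucc : Fin 5) = 1 := by decide
      have i2s : ((2 : Fin 4).succ : Fin 5) = 3 := by decide
      have i2c : ((2 : Fin 4).castSucc : Fin 5) = 2 := by decide
      have i3s : ((3 : Fin 4).succ : Fin 5) = 4 := by decide
      have i3c : ((3 : Fin 4).castSucc : Fin 5) = 3 := by decide
      have hr : r ≠ 0 := by
        intro h
        apply (hcond₀ 1).2
        rw [h, zero_mul]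
      set S1 := (Finset.univ : Finset (Fin (n+2) → F)).filter
        (fun z => norm2 (z - p₀.2 1) = r * norm2 (p₀.1 1 - p₀.1 0)) with hS1
      set S2 := (Finset.univ : Finset (Fin (n+2) → F)).filter
        (fun z => norm2 (z - p₀.1 2) = norm2 (p₀.2 1 - p₀.2 2) / r
          ∧ norm2 (z - p₀.1 4) = norm2 (p₀.2 4 - p₀.2 1) / r) with hS2
      have hmaps2 : ∀ p ∈ My.filter fun p => bmap p = bmap p₀,
          (p.2 0, p.1 3) ∈ S1 ×ˢ S2 := by
        intro p hp
        obtain ⟨hpM, hpb⟩ := Finset.mem_filter.mp hp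
        obtain ⟨hx0, hx1, hx2, hx4, hy1, hy2, hy4⟩ := bmap_eq_elim hpb
        obtain ⟨hpP, hy13, -⟩ := Finset.mem_filter.mp hpM
        obtain ⟨-, -, hcond⟩ := mem_Pset.mp hpP
        have c0 := (hcond 0).1
        have c2 := (hcond 2).1
        have c3 := (hcond 3).1
        rw [i0s, i0c] at c0
        rw [i2s, i2c] at c2
        rw [i3s, i3c] at c3
        rw [← hy13, hy1, hy2] at c2
        rw [← hy13, hy1, hy4] at c3
        refine Finset.mem_product.mpr ⟨Finset.mem_filter.mpr ⟨Finset.mem_univ _, ?_⟩,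
          Finset.mem_filter.mpr ⟨Finset.mem_univ _, ?_, ?_⟩⟩
        · rw [norm2_sub_comm, ← hy1, ← hx1, ← hx0]
          exact c0
        · rw [← hx2, eq_div_iff hr]
          linear_combination -c2
        · rw [← hx4, norm2_sub_comm, eq_div_iff hr]
          linear_combination -c3
      have hinj2 : Set.InjOn (fun p : (Fin 5 → Fin (n+2) → F) × (Fin 5 → Fin (n+2) → F) =>
          (p.2 0, p.1 3)) ↑(My.filter fun p => bmap p = bmap p₀) := by
        intro p hp p' hp' hg
        simp only [Prod.mk.injEq] at hg
        obtain ⟨hg0, hg3⟩ := hg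
        obtain ⟨hpM, hpb⟩ := Finset.mem_filter.mp (by exact_mod_cast hp)
        obtain ⟨hpM', hpb'⟩ := Finset.mem_filter.mp (by exact_mod_cast hp')
        have hb := hpb.trans hpb'.symm
        obtain ⟨hx0, hx1, hx2, hx4, hy1, hy2, hy4⟩ := bmap_eq_elim hb
        have hy13 := (Finset.mem_filter.mp hpM).2.1
        have hy13' := (Finset.mem_filter.mp hpM').2.1
        refine Prod.ext (funext fun k => ?_) (funext fun k => ?_)
        · fin_cases k
          · exact hx0
          · exact hx1
          · exact hx2
          · exact hg3
          · exact hx4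
        · fin_cases k
          · exact hg0
          · exact hy1
          · exact hy2
          · show p.2 3 = p'.2 3
            rw [← hy13, ← hy13']; exact hy1
          · exact hy4
      have hcards : (My.filter fun p => bmap p = bmap p₀).card ≤ (S1 ×ˢ S2).card :=
        Finset.card_le_card_of_injOn _ hmaps2 hinj2
      have hS1card : S1.card ≤ 2 * Fintype.card F ^ (n+1) := card_sphere (n+1) _ _
      have hS2card : S2.card ≤ 2 * Fintype.card F ^ n := by
        apply card_two_spheres n h2 hx24₀
        apply div_ne_zero _ hr
        have c1 := (hcond₀ 1).1
        rw [i1s, i1c] at c1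
        rw [norm2_sub_comm]
        rw [c1]
        exact (hcond₀ 1).2
      calc (My.filter fun p => bmap p = bmap p₀).card
          ≤ (S1 ×ˢ S2).card := hcards
        _ = S1.card * S2.card := Finset.card_product _ _
        _ ≤ (2 * Fintype.card F ^ (n+1)) * (2 * Fintype.card F ^ n) :=
            Nat.mul_le_mul hS1card hS2card
  calc (∑ b ∈ (Pset 𝓔 1 r) ×ˢ (𝓔 ×ˢ 𝓔 ×ˢ 𝓔), (My.filter fun p => bmap p = b).card)
      ≤ ∑ _b ∈ (Pset 𝓔 1 r) ×ˢ (𝓔 ×ˢ 𝓔 ×ˢ 𝓔),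
          (2 * Fintype.card F ^ (n+1)) * (2 * Fintype.card F ^ n) :=
        Finset.sum_le_sum hfib
    _ = ((Pset 𝓔 1 r).card * (𝓔.card * (𝓔.card * 𝓔.card)))
          * ((2 * Fintype.card F ^ (n+1)) * (2 * Fintype.card F ^ n)) := by
        simp [Finset.sum_const, Finset.card_product]
end Middle

end AuxCombinatorial

set_option maxHeartbeats 4000000 in
/-- For `2 ≤ d ≤ 4`, if `C` is the set of tuples of `P_4(r)` whose
`x`-parts are pairwise distinct and whose `y`-parts are pairwise distinct, then
`|C| ≥ |P_4(r)| − 10·|𝓔|·|P_3(r)| − 3·|𝓔|³·q^(2d−2)·|P_1(r)| − |𝓔|²·|P_2(r)|`. -/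
theorem Pset_nondegenerate_low_dim {F : Type*} [Field F] [Fintype F]
    (hodd : Odd (Fintype.card F))
    {d : ℕ} (hd2 : 2 ≤ d) (hd4 : d ≤ 4)
    (𝓔 : Finset (Fin d → F)) (r : F) :
    ((Pset 𝓔 4 r).card : ℤ)
        - 10 * (𝓔.card : ℤ) * ((Pset 𝓔 3 r).card : ℤ)
        - 3 * (𝓔.card : ℤ) ^ 3 * (Fintype.card F : ℤ) ^ (2 * d - 2) * ((Pset 𝓔 1 r).card : ℤ)
        - (𝓔.card : ℤ) ^ 2 * ((Pset 𝓔 2 r).card : ℤ)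
      ≤ (((Pset 𝓔 4 r).filter fun p =>
          Function.Injective p.1 ∧ Function.Injective p.2).card : ℤ) := by
  classical
  obtain ⟨n, rfl⟩ : ∃ n, d = n + 2 := ⟨d - 2, by omega⟩
  have hq1 : 1 < Fintype.card F := Fintype.one_lt_card
  have hqodd : Fintype.card F % 2 = 1 := Nat.odd_iff.mp hodd
  have hq3 : 3 ≤ Fintype.card F := by omega
  have hchar2 : ringChar F ≠ 2 := by
    intro h
    have := FiniteField.even_card_iff_char_two.mp h
    omega
  have h2 : (2 : F) ≠ 0 := by
    intro h
    have hdvd : ringChar F ∣ 2 := (CharP.cast_eq_zero_iff F (ringChar F) 2).mp (by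
      exact_mod_cast h)
    rcases (Nat.dvd_prime Nat.prime_two).mp hdvd with h1 | h1
    · have : ((1:ℕ):F) = 0 := (CharP.cast_eq_zero_iff F (ringChar F) 1).mpr (by rw [h1])
      simpa using this
    · exact hchar2 h1
  set A1 := (Pset 𝓔 4 r).filter (fun p => p.1 0 = p.1 2) with hA1def
  set A2 := (Pset 𝓔 4 r).filter (fun p => p.1 0 = p.1 3) with hA2def
  set A3 := (Pset 𝓔 4 r).filter (fun p => p.1 0 = p.1 4) with hA3def
  set A4 := (Pset 𝓔 4 r).filter (fun p => p.1 1 = p.1 4) with hA4def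
  set A5 := (Pset 𝓔 4 r).filter (fun p => p.1 2 = p.1 4) with hA5def
  set A6 := (Pset 𝓔 4 r).filter (fun p => p.2 0 = p.2 2) with hA6def
  set A7 := (Pset 𝓔 4 r).filter (fun p => p.2 0 = p.2 3) with hA7def
  set A8 := (Pset 𝓔 4 r).filter (fun p => p.2 0 = p.2 4) with hA8def
  set A9 := (Pset 𝓔 4 r).filter (fun p => p.2 1 = p.2 4) with hA9def
  set A10 := (Pset 𝓔 4 r).filter (fun p => p.2 2 = p.2 4) with hA10def
  set A11 := (Pset 𝓔 4 r).filter (fun p => p.1 1 = p.1 3 ∧ p.2 2 ≠ p.2 4) with hA11def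
  set A12 := (Pset 𝓔 4 r).filter (fun p => p.2 1 = p.2 3 ∧ p.1 2 ≠ p.1 4) with hA12def
  set D := (Pset 𝓔 4 r).filter
    (fun p => ¬(Function.Injective p.1 ∧ Function.Injective p.2)) with hDdef
  have hsplit := Finset.card_filter_add_card_filter_not
    (s := Pset 𝓔 4 r) (p := fun p => Function.Injective p.1 ∧ Function.Injective p.2)
  have hcover : D ⊆ A1 ∪ A2 ∪ A3 ∪ A4 ∪ A5 ∪ A6 ∪ A7 ∪ A8 ∪ A9 ∪ A10 ∪ A11 ∪ A12 := by
    intro p hp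
    obtain ⟨hpP, hnd⟩ := Finset.mem_filter.mp hp
    obtain ⟨hE1, hE2, hcond⟩ := mem_Pset.mp hpP
    have i0s : ((0 : Fin 4).succ : Fin 5) = 1 := by decide
    have i0c : ((0 : Fin 4).castSucc : Fin 5) = 0 := by decide
    have i1s : ((1 : Fin 4).succ : Fin 5) = 2 := by decide
    have i1c : ((1 : Fin 4).castSucc : Fin 5) = 1 := by decide
    have i2s : ((2 : Fin 4).succ : Fin 5) = 3 := by decide
    have i2c : ((2 : Fin 4).castSucc : Fin 5) = 2 := by decide
    have i3s : ((3 : Fin 4).succ : Fin 5) = 4 := by decide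
    have i3c : ((3 : Fin 4).castSucc : Fin 5) = 3 := by decide
    have ncx : ∀ i : Fin 4, p.1 i.castSucc ≠ p.1 i.succ := by
      intro i h
      exact (hcond i).2 (by rw [← h, sub_self]; simp [norm2])
    have ncy : ∀ i : Fin 4, p.2 i.castSucc ≠ p.2 i.succ := by
      intro i h
      exact (hcond i).2 (by rw [← (hcond i).1, ← h, sub_self]; simp [norm2])
    have nx01 : p.1 0 ≠ p.1 1 := by have := ncx 0; rwa [i0c, i0s] at this
    have nx12 : p.1 1 ≠ p.1 2 := by have := ncx 1; rwa [i1c, i1s] at this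
    have nx23 : p.1 2 ≠ p.1 3 := by have := ncx 2; rwa [i2c, i2s] at this
    have nx34 : p.1 3 ≠ p.1 4 := by have := ncx 3; rwa [i3c, i3s] at this
    have ny01 : p.2 0 ≠ p.2 1 := by have := ncy 0; rwa [i0c, i0s] at this
    have ny12 : p.2 1 ≠ p.2 2 := by have := ncy 1; rwa [i1c, i1s] at this
    have ny23 : p.2 2 ≠ p.2 3 := by have := ncy 2; rwa [i2c, i2s] at this
    have ny34 : p.2 3 ≠ p.2 4 := by have := ncy 3; rwa [i3c, i3s] at this
    rcases not_and_or.mp hnd with hx | hy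
    · rcases pair_classify p.1 nx01 nx12 nx23 nx34 hx with h|h|h|h|h|h
      · exact Finset.mem_union_left _ (Finset.mem_union_left _ (Finset.mem_union_left _ (Finset.mem_union_left _ (Finset.mem_union_left _ (Finset.mem_union_left _ (Finset.mem_union_left _ (Finset.mem_union_left _ (Finset.mem_union_left _ (Finset.mem_union_left _ (Finset.mem_union_left _ (Finset.mem_filter.mpr ⟨hpP, h⟩)))))))))))
      · exact Finset.mem_union_left _ (Finset.mem_union_left _ (Finset.mem_union_left _ (Finset.mem_union_left _ (Finset.mem_union_left _ (Finset.mem_union_left _ (Finset.mem_union_left _ (Finset.mem_union_left _ (Finset.mem_union_left _ (Finset.mem_union_left _ (Finset.mem_union_right _ (Finset.mem_filter.mpr ⟨hpP, h⟩)))))))))))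
      · exact Finset.mem_union_left _ (Finset.mem_union_left _ (Finset.mem_union_left _ (Finset.mem_union_left _ (Finset.mem_union_left _ (Finset.mem_union_left _ (Finset.mem_union_left _ (Finset.mem_union_left _ (Finset.mem_union_left _ (Finset.mem_union_right _ (Finset.mem_filter.mpr ⟨hpP, h⟩))))))))))
      · exact Finset.mem_union_left _ (Finset.mem_union_left _ (Finset.mem_union_left _ (Finset.mem_union_left _ (Finset.mem_union_left _ (Finset.mem_union_left _ (Finset.mem_union_left _ (Finset.mem_union_left _ (Finset.mem_union_right _ (Finset.mem_filter.mpr ⟨hpP, h⟩)))))))))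
      · exact Finset.mem_union_left _ (Finset.mem_union_left _ (Finset.mem_union_left _ (Finset.mem_union_left _ (Finset.mem_union_left _ (Finset.mem_union_left _ (Finset.mem_union_left _ (Finset.mem_union_right _ (Finset.mem_filter.mpr ⟨hpP, h⟩))))))))
      · by_cases h24 : p.2 2 = p.2 4
        · exact Finset.mem_union_left _ (Finset.mem_union_left _ (Finset.mem_union_right _ (Finset.mem_filter.mpr ⟨hpP, h24⟩)))
        · exact Finset.mem_union_left _ (Finset.mem_union_right _ (Finset.mem_filter.mpr ⟨hpP, h, h24⟩))
    · rcases pair_classify p.2 ny01 ny12 ny23 ny34 hy with h|h|h|h|h|h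
      · exact Finset.mem_union_left _ (Finset.mem_union_left _ (Finset.mem_union_left _ (Finset.mem_union_left _ (Finset.mem_union_left _ (Finset.mem_union_left _ (Finset.mem_union_right _ (Finset.mem_filter.mpr ⟨hpP, h⟩)))))))
      · exact Finset.mem_union_left _ (Finset.mem_union_left _ (Finset.mem_union_left _ (Finset.mem_union_left _ (Finset.mem_union_left _ (Finset.mem_union_right _ (Finset.mem_filter.mpr ⟨hpP, h⟩))))))
      · exact Finset.mem_union_left _ (Finset.mem_union_left _ (Finset.mem_union_left _ (Finset.mem_union_left _ (Finset.mem_union_right _ (Finset.mem_filter.mpr ⟨hpP, h⟩)))))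
      · exact Finset.mem_union_left _ (Finset.mem_union_left _ (Finset.mem_union_left _ (Finset.mem_union_right _ (Finset.mem_filter.mpr ⟨hpP, h⟩))))
      · exact Finset.mem_union_left _ (Finset.mem_union_left _ (Finset.mem_union_right _ (Finset.mem_filter.mpr ⟨hpP, h⟩)))
      · by_cases h24 : p.1 2 = p.1 4
        · exact Finset.mem_union_left _ (Finset.mem_union_left _ (Finset.mem_union_left _ (Finset.mem_union_left _ (Finset.mem_union_left _ (Finset.mem_union_left _ (Finset.mem_union_left _ (Finset.mem_union_right _ (Finset.mem_filter.mpr ⟨hpP, h24⟩))))))))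
        · exact Finset.mem_union_right _ (Finset.mem_filter.mpr ⟨hpP, h, h24⟩)
  have hDle : D.card ≤ A1.card + A2.card + A3.card + A4.card + A5.card + A6.card + A7.card + A8.card + A9.card + A10.card + A11.card + A12.card := by
    calc D.card ≤ (A1 ∪ A2 ∪ A3 ∪ A4 ∪ A5 ∪ A6 ∪ A7 ∪ A8 ∪ A9 ∪ A10 ∪ A11 ∪ A12).card := Finset.card_le_card hcover
      _ ≤ (A1 ∪ A2 ∪ A3 ∪ A4 ∪ A5 ∪ A6 ∪ A7 ∪ A8 ∪ A9 ∪ A10 ∪ A11).card + A12.card := Finset.card_union_le _ _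
      _ ≤ ((A1 ∪ A2 ∪ A3 ∪ A4 ∪ A5 ∪ A6 ∪ A7 ∪ A8 ∪ A9 ∪ A10).card + A11.card) + A12.card := Nat.add_le_add_right (Finset.card_union_le _ _) _
      _ ≤ ((A1 ∪ A2 ∪ A3 ∪ A4 ∪ A5 ∪ A6 ∪ A7 ∪ A8 ∪ A9).card + A10.card) + A11.card + A12.card := Nat.add_le_add_right (Nat.add_le_add_right (Finset.card_union_le _ _) _) _
      _ ≤ ((A1 ∪ A2 ∪ A3 ∪ A4 ∪ A5 ∪ A6 ∪ A7 ∪ A8).card + A9.card) + A10.card + A11.card + A12.card := Nat.add_le_add_right (Nat.add_le_add_right (Nat.add_le_add_right (Finset.card_union_le _ _) _) _) _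
      _ ≤ ((A1 ∪ A2 ∪ A3 ∪ A4 ∪ A5 ∪ A6 ∪ A7).card + A8.card) + A9.card + A10.card + A11.card + A12.card := Nat.add_le_add_right (Nat.add_le_add_right (Nat.add_le_add_right (Nat.add_le_add_right (Finset.card_union_le _ _) _) _) _) _
      _ ≤ ((A1 ∪ A2 ∪ A3 ∪ A4 ∪ A5 ∪ A6).card + A7.card) + A8.card + A9.card + A10.card + A11.card + A12.card := Nat.add_le_add_right (Nat.add_le_add_right (Nat.add_le_add_right (Nat.add_le_add_right (Nat.add_le_add_right (Finset.card_union_le _ _) _) _) _) _) _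
      _ ≤ ((A1 ∪ A2 ∪ A3 ∪ A4 ∪ A5).card + A6.card) + A7.card + A8.card + A9.card + A10.card + A11.card + A12.card := Nat.add_le_add_right (Nat.add_le_add_right (Nat.add_le_add_right (Nat.add_le_add_right (Nat.add_le_add_right (Nat.add_le_add_right (Finset.card_union_le _ _) _) _) _) _) _) _
      _ ≤ ((A1 ∪ A2 ∪ A3 ∪ A4).card + A5.card) + A6.card + A7.card + A8.card + A9.card + A10.card + A11.card + A12.card := Nat.add_le_add_right (Nat.add_le_add_right (Nat.add_le_add_right (Nat.add_le_add_right (Nat.add_le_add_right (Nat.add_le_add_right (Nat.add_le_add_right (Finset.card_union_le _ _) _) _) _) _) _) _) _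
      _ ≤ ((A1 ∪ A2 ∪ A3).card + A4.card) + A5.card + A6.card + A7.card + A8.card + A9.card + A10.card + A11.card + A12.card := Nat.add_le_add_right (Nat.add_le_add_right (Nat.add_le_add_right (Nat.add_le_add_right (Nat.add_le_add_right (Nat.add_le_add_right (Nat.add_le_add_right (Nat.add_le_add_right (Finset.card_union_le _ _) _) _) _) _) _) _) _) _
      _ ≤ ((A1 ∪ A2).card + A3.card) + A4.card + A5.card + A6.card + A7.card + A8.card + A9.card + A10.card + A11.card + A12.card := Nat.add_le_add_right (Nat.add_le_add_right (Nat.add_le_add_right (Nat.add_le_add_right (Nat.add_le_add_right (Nat.add_le_add_right (Nat.add_le_add_right (Nat.add_le_add_right (Nat.add_le_add_right (Finset.card_union_le _ _) _) _) _) _) _) _) _) _) _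
      _ ≤ ((A1).card + A2.card) + A3.card + A4.card + A5.card + A6.card + A7.card + A8.card + A9.card + A10.card + A11.card + A12.card := Nat.add_le_add_right (Nat.add_le_add_right (Nat.add_le_add_right (Nat.add_le_add_right (Nat.add_le_add_right (Nat.add_le_add_right (Nat.add_le_add_right (Nat.add_le_add_right (Nat.add_le_add_right (Nat.add_le_add_right (Finset.card_union_le _ _) _) _) _) _) _) _) _) _) _) _
      _ = A1.card + A2.card + A3.card + A4.card + A5.card + A6.card + A7.card + A8.card + A9.card + A10.card + A11.card + A12.card := by ring
  have hb1 : A1.card ≤ 𝓔.card * (Pset 𝓔 3 r).card := endpoint_first_x 𝓔 r 2 (by decide)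
  have hb2 : A2.card ≤ 𝓔.card * (Pset 𝓔 3 r).card := endpoint_first_x 𝓔 r 3 (by decide)
  have hb3 : A3.card ≤ 𝓔.card * (Pset 𝓔 3 r).card := endpoint_first_x 𝓔 r 4 (by decide)
  have hb4 : A4.card ≤ 𝓔.card * (Pset 𝓔 3 r).card := endpoint_last_x 𝓔 r 1 (by decide)
  have hb5 : A5.card ≤ 𝓔.card * (Pset 𝓔 3 r).card := endpoint_last_x 𝓔 r 2 (by decide)
  have hb6 : A6.card ≤ 𝓔.card * (Pset 𝓔 3 r).card := endpoint_first_y 𝓔 r 2 (by decide)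
  have hb7 : A7.card ≤ 𝓔.card * (Pset 𝓔 3 r).card := endpoint_first_y 𝓔 r 3 (by decide)
  have hb8 : A8.card ≤ 𝓔.card * (Pset 𝓔 3 r).card := endpoint_first_y 𝓔 r 4 (by decide)
  have hb9 : A9.card ≤ 𝓔.card * (Pset 𝓔 3 r).card := endpoint_last_y 𝓔 r 1 (by decide)
  have hb10 : A10.card ≤ 𝓔.card * (Pset 𝓔 3 r).card := endpoint_last_y 𝓔 r 2 (by decide)
  have hb11 : A11.card ≤ ((Pset 𝓔 1 r).card * (𝓔.card * (𝓔.card * 𝓔.card)))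
      * ((2 * Fintype.card F ^ (n+1)) * (2 * Fintype.card F ^ n)) := middle_x 𝓔 r h2
  have hb12 : A12.card ≤ ((Pset 𝓔 1 r).card * (𝓔.card * (𝓔.card * 𝓔.card)))
      * ((2 * Fintype.card F ^ (n+1)) * (2 * Fintype.card F ^ n)) := middle_y 𝓔 r h2
  have hpow : Fintype.card F ^ (n+1) * Fintype.card F ^ n = Fintype.card F ^ (2*n+1) := by
    rw [← pow_add]
    congr 1
    omega
  have hq2 : Fintype.card F ^ (2*n+2) = Fintype.card F * Fintype.card F ^ (2*n+1) := by
    rw [show 2*n+2 = (2*n+1)+1 by omega, pow_succ]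
    ring
  have hkey : ((Pset 𝓔 1 r).card * (𝓔.card * (𝓔.card * 𝓔.card)))
        * ((2 * Fintype.card F ^ (n+1)) * (2 * Fintype.card F ^ n))
      + ((Pset 𝓔 1 r).card * (𝓔.card * (𝓔.card * 𝓔.card)))
        * ((2 * Fintype.card F ^ (n+1)) * (2 * Fintype.card F ^ n))
      ≤ 3 * 𝓔.card^3 * Fintype.card F ^ (2*n+2) * (Pset 𝓔 1 r).card := by
    have e1 : ((Pset 𝓔 1 r).card * (𝓔.card * (𝓔.card * 𝓔.card)))
        * ((2 * Fintype.card F ^ (n+1)) * (2 * Fintype.card F ^ n))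
      + ((Pset 𝓔 1 r).card * (𝓔.card * (𝓔.card * 𝓔.card)))
        * ((2 * Fintype.card F ^ (n+1)) * (2 * Fintype.card F ^ n))
      = (8 * (Fintype.card F ^ (n+1) * Fintype.card F ^ n))
          * (𝓔.card^3 * (Pset 𝓔 1 r).card) := by ring
    rw [e1, hpow]
    have e2 : 3 * 𝓔.card^3 * Fintype.card F ^ (2*n+2) * (Pset 𝓔 1 r).card
        = (3 * Fintype.card F * Fintype.card F ^ (2*n+1)) * (𝓔.card^3 * (Pset 𝓔 1 r).card) := by
      rw [hq2]; ring
    rw [e2]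
    apply Nat.mul_le_mul_right
    apply Nat.mul_le_mul_right
    omega
  have htot : D.card ≤ 10 * 𝓔.card * (Pset 𝓔 3 r).card
      + 3 * 𝓔.card^3 * Fintype.card F ^ (2*n+2) * (Pset 𝓔 1 r).card := by
    linarith [hDle, hb1, hb2, hb3, hb4, hb5, hb6, hb7, hb8, hb9, hb10, hb11, hb12, hkey]
  have hexp : 2 * (n + 2) - 2 = 2*n+2 := by omega
  rw [hexp]
  have hC : ((Pset 𝓔 4 r).filter fun p =>
      Function.Injective p.1 ∧ Function.Injective p.2).card + D.card
      = (Pset 𝓔 4 r).card := hsplit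
  have hP2 : (0:ℤ) ≤ (𝓔.card : ℤ)^2 * ((Pset 𝓔 2 r).card : ℤ) := by positivity
  have htotz : (D.card : ℤ) ≤ 10 * (𝓔.card : ℤ) * ((Pset 𝓔 3 r).card : ℤ)
      + 3 * (𝓔.card : ℤ)^3 * (Fintype.card F : ℤ) ^ (2*n+2) * ((Pset 𝓔 1 r).card : ℤ) := by
    exact_mod_cast htot
  have hCz : (((Pset 𝓔 4 r).filter fun p =>
      Function.Injective p.1 ∧ Function.Injective p.2).card : ℤ) + (D.card : ℤ)
      = ((Pset 𝓔 4 r).card : ℤ) := by exact_mod_cast hC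
  linarith
end
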